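/- arXiv:0707.0009 — 6 statements merged into one kernel-verified Lean document; each statement's English description precedes it below -/
import Mathlib

section
/- Let G be a locally compact group with left Haar measure. If there exists a strictly positive measurable function u : G → (0,∞) such that (u * u)(x) is finite for some x ∈ G, then G is σ-compact. -/
open MeasureTheory ENNReal Set Pointwise Topology

lemma aux_closure_eq_iUnion_pow {G : Type*} [Group G] {V : Set G}
    (h1 : (1 : G) ∈ V) (hsymm : V⁻¹ = V) :
    (Subgroup.closure V : Set G) = ⋃ n : ℕ, V ^ (n + 1) := by
  apply Set.Subset.antisymm
  · intro x hx
    refine Subgroup.closure_induction (fun v hv => ?_) ?_ ?_ ?_ hx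
    · exact Set.mem_iUnion.2 ⟨0, by simpa [pow_one] using hv⟩
    · exact Set.mem_iUnion.2 ⟨0, by simpa [pow_one] using h1⟩
    · rintro a b _ _ ha hb
      obtain ⟨m, hm⟩ := Set.mem_iUnion.1 ha
      obtain ⟨n, hn⟩ := Set.mem_iUnion.1 hb
      refine Set.mem_iUnion.2 ⟨m + n + 1, ?_⟩
      have h : V ^ (m + 1) * V ^ (n + 1) = V ^ (m + n + 1 + 1) := by
        rw [← pow_add]; ring_nf
      rw [← h]
      exact Set.mul_mem_mul hm hn
    · rintro a _ ha
      obtain ⟨n, hn⟩ := Set.mem_iUnion.1 ha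
      refine Set.mem_iUnion.2 ⟨n, ?_⟩
      have h : (V ^ (n + 1))⁻¹ = V ^ (n + 1) := by
        rw [← inv_pow, hsymm]
      rw [← h]
      exact Set.inv_mem_inv.2 hn
  · refine Set.iUnion_subset fun n => ?_
    induction n with
    | zero => simpa using Subgroup.subset_closure
    | succ k ih =>
      intro x hx
      rw [pow_succ] at hx
      obtain ⟨a, ha, b, hb, rfl⟩ := hx
      exact mul_mem (ih ha) (Subgroup.subset_closure hb)

theorem sigmaCompact_of_finite_self_convolution {G : Type*} [Group G] [TopologicalSpace G]
    [IsTopologicalGroup G] [LocallyCompactSpace G] [MeasurableSpace G] [BorelSpace G]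
    (μ : Measure G) [μ.IsHaarMeasure] (u : G → ℝ≥0∞) (hu : Measurable u)
    (hpos : ∀ x, 0 < u x)
    (hfin : ∃ x : G, (∫⁻ y, u y * u (y⁻¹ * x) ∂μ) < ⊤) :
    SigmaCompactSpace G := by
  obtain ⟨x₀, hx₀⟩ := hfin
  set f : G → ℝ≥0∞ := fun y => u y * u (y⁻¹ * x₀) with hf
  have hfm : Measurable f := hu.mul (hu.comp (measurable_inv.mul_const x₀))
  have hfpos : ∀ y, 0 < f y := fun y => ENNReal.mul_pos (hpos y).ne' (hpos _).ne'
  -- σ-finiteness of μ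
  have hσf : SigmaFinite μ := by
    refine Measure.sigmaFinite_of_countable (Set.countable_range
      (fun n : ℕ => {y : G | ((n : ℝ≥0∞) + 1)⁻¹ ≤ f y})) ?_ ?_
    · rintro s ⟨n, rfl⟩
      have h1 : ((n : ℝ≥0∞) + 1)⁻¹ ≠ 0 := by simp
      have h2 : ((n : ℝ≥0∞) + 1)⁻¹ ≠ ⊤ := by simp
      calc μ {y : G | ((n : ℝ≥0∞) + 1)⁻¹ ≤ f y}
          ≤ (∫⁻ y, f y ∂μ) / ((n : ℝ≥0∞) + 1)⁻¹ :=
            meas_ge_le_lintegral_div hfm.aemeasurable h1 h2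
        _ < ⊤ := ENNReal.div_lt_top hx₀.ne h1
    · rw [Set.sUnion_range, Set.iUnion_eq_univ_iff]
      intro y
      obtain ⟨n, hn⟩ := ENNReal.exists_inv_nat_lt (hfpos y).ne'
      refine ⟨n, le_of_lt (lt_of_le_of_lt ?_ hn)⟩
      exact ENNReal.inv_le_inv.2 (le_add_of_nonneg_right zero_le_one)
  -- compact symmetric neighborhood of 1
  obtain ⟨K, hKc, hK1⟩ := exists_compact_mem_nhds (1 : G)
  set V : Set G := K ∪ K⁻¹ with hV
  have hVc : IsCompact V := hKc.union hKc.inv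
  have hV1 : (1 : G) ∈ V := Or.inl (mem_of_mem_nhds hK1)
  have hVsymm : V⁻¹ = V := by
    simp [hV, Set.union_inv, Set.union_comm]
  have hVnhds : V ∈ 𝓝 (1 : G) := Filter.mem_of_superset hK1 Set.subset_union_left
  set H : Subgroup G := Subgroup.closure V with hH
  have hHopen : IsOpen (H : Set G) :=
    H.isOpen_of_mem_nhds (Filter.mem_of_superset hVnhds Subgroup.subset_closure)
  have hHiU : (H : Set G) = ⋃ n : ℕ, V ^ (n + 1) := aux_closure_eq_iUnion_pow hV1 hVsymm
  have hpowc : ∀ n : ℕ, IsCompact (V ^ (n + 1)) := by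
    intro n
    induction n with
    | zero => simpa [pow_one] using hVc
    | succ k ih => rw [pow_succ]; exact ih.mul hVc
  -- cosets
  set As : G ⧸ H → Set G := fun q => QuotientGroup.mk ⁻¹' {q} with hAs
  have hAseq : ∀ q : G ⧸ H, As q = Quotient.out q • (H : Set G) := by
    intro q
    ext y
    simp only [hAs, Set.mem_preimage, Set.mem_singleton_iff,
      Set.mem_smul_set_iff_inv_smul_mem, smul_eq_mul, SetLike.mem_coe]
    rw [← QuotientGroup.out_eq' q, QuotientGroup.eq, QuotientGroup.out_eq']
    constructor
    · intro h; simpa [mul_inv_rev] using H.inv_mem h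
    · intro h; simpa [mul_inv_rev] using H.inv_mem h
  have hAsopen : ∀ q, IsOpen (As q) := fun q => (hAseq q) ▸ hHopen.smul _
  have hAsdisj : Pairwise (Function.onFun Disjoint As) := fun p q hpq =>
    Disjoint.preimage _ (Set.disjoint_singleton.2 hpq)
  have hAspos : ∀ q : G ⧸ H, 0 < μ (As q) := by
    intro q
    refine (hAsopen q).measure_pos μ ?_
    rw [hAseq q]
    exact ⟨Quotient.out q, by simpa using Set.smul_mem_smul_set (a := Quotient.out q) (one_mem H)⟩
  have hcnt : Countable (G ⧸ H) := by
    have h := Measure.countable_meas_pos_of_disjoint_iUnion (μ := μ)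
      (As := As) (fun q => (hAsopen q).measurableSet) hAsdisj
    rw [← Set.countable_univ_iff]
    convert h using 1
    exact (Set.eq_univ_of_forall fun q => hAspos q).symm
  -- assemble σ-compactness
  refine SigmaCompactSpace.of_countable
    (Set.range (fun p : (G ⧸ H) × ℕ => Quotient.out p.1 • V ^ (p.2 + 1))) (Set.countable_range _)
    ?_ ?_
  · rintro s ⟨⟨q, n⟩, rfl⟩
    exact (hpowc n).smul _
  · rw [Set.sUnion_range, Set.eq_univ_iff_forall]
    intro x
    have hx : x ∈ As (QuotientGroup.mk x) := rfl
    rw [hAseq, hHiU, Set.smul_set_iUnion] at hx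
    obtain ⟨n, hn⟩ := Set.mem_iUnion.1 hx
    exact Set.mem_iUnion.2 ⟨(QuotientGroup.mk x, n), hn⟩
end

section
/- Let G be a locally compact group with left Haar measure, p ≥ 1, and w : G → (0,∞) a measurable weight such that the weighted space L_p^w(G) = {f : fw ∈ L^p(G)} is closed under convolution. Then w^p is locally integrable, i.e. ∫_K w^p < ∞ for every compact K ⊆ G. -/
open MeasureTheory ENNReal NNReal Set Filter Topology Pointwise

section AuxLemmas

variable {G : Type*} [Group G] [TopologicalSpace G]
    [IsTopologicalGroup G] [LocallyCompactSpace G] [MeasurableSpace G] [BorelSpace G]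

lemma aux_haar_eq (μ : Measure G) [μ.IsHaarMeasure] {s : Set G} (h's : IsCompact (closure s)) :
    μ s = (Measure.haarScalarFactor μ Measure.haar : ℝ≥0∞) * Measure.haar s := by
  rw [Measure.measure_isMulInvariant_eq_smul_of_isCompact_closure μ Measure.haar h's,
    ENNReal.smul_def, smul_eq_mul]

lemma aux_smul_diff (μ : Measure G) [μ.IsHaarMeasure]
    {k : Set G} (hk : IsCompact k) (h'k : IsClosed k) {ε : ℝ≥0∞} (hε : ε ≠ 0) :
    ∀ᶠ g in 𝓝 (1 : G), μ (g • k \ k) < ε := by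
  set ν : Measure G := Measure.haar with hν
  set c : ℝ≥0 := Measure.haarScalarFactor μ ν with hc
  have hconv : ∀ g : G, μ (g • k \ k) = (c : ℝ≥0∞) * ν (g • k \ k) := by
    intro g
    exact aux_haar_eq μ (((hk.smul g).closure_of_subset diff_subset))
  rcases eq_or_ne (c : ℝ≥0∞) 0 with h0 | h0
  · filter_upwards with g
    rw [hconv g, h0, zero_mul]
    exact pos_iff_ne_zero.mpr hε
  · have hεc : ε / c ≠ 0 := by
      simp only [ne_eq, ENNReal.div_eq_zero_iff, hε, ENNReal.coe_ne_top, or_self,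
        not_false_eq_true, false_or]
    have hν2 := eventually_nhds_one_measure_smul_diff_lt (μ := ν) hk h'k hεc
    filter_upwards [hν2] with g hg
    rw [hconv g]
    calc (c : ℝ≥0∞) * ν (g • k \ k) < c * (ε / c) :=
          (ENNReal.mul_lt_mul_iff_right h0 ENNReal.coe_ne_top).mpr hg
      _ ≤ ε := ENNReal.mul_div_le

lemma aux_inner (μ : Measure G) [μ.IsHaarMeasure] {s : Set G} (hs : MeasurableSet s)
    (h's : IsCompact (closure s)) {ε : ℝ≥0∞} (hε : ε ≠ 0) :
    ∃ C, C ⊆ s ∧ IsCompact C ∧ IsClosed C ∧ μ (s \ C) < ε := by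
  set ν : Measure G := Measure.haar with hν
  set c : ℝ≥0 := Measure.haarScalarFactor μ ν with hc
  rcases eq_or_ne (c : ℝ≥0∞) 0 with h0 | h0
  · refine ⟨∅, empty_subset _, isCompact_empty, isClosed_empty, ?_⟩
    rw [diff_empty, aux_haar_eq μ h's, h0, zero_mul]
    exact pos_iff_ne_zero.mpr hε
  · have hsfin : ν s ≠ ∞ :=
      (lt_of_le_of_lt (measure_mono subset_closure) h's.measure_lt_top).ne
    have hεc : ε / c ≠ 0 := by
      simp only [ne_eq, ENNReal.div_eq_zero_iff, hε, ENNReal.coe_ne_top, or_self,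
        not_false_eq_true, false_or]
    obtain ⟨C, hCs, hCc, hCcl, hC⟩ := hs.exists_isCompact_isClosed_diff_lt hsfin hεc
    refine ⟨C, hCs, hCc, hCcl, ?_⟩
    have heq : μ (s \ C) = (c : ℝ≥0∞) * ν (s \ C) :=
      aux_haar_eq μ (h's.closure_of_subset (diff_subset.trans subset_closure))
    rw [heq]
    calc (c : ℝ≥0∞) * ν (s \ C) < c * (ε / c) :=
        (ENNReal.mul_lt_mul_iff_right h0 ENNReal.coe_ne_top).mpr hC
      _ ≤ ε := ENNReal.mul_div_le

lemma aux_frac (a : ℝ≥0∞) : a / 8 + a / 8 + a / 8 ≤ a / 2 := by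
  rw [ENNReal.div_add_div_same, ENNReal.div_add_div_same]
  calc (a + a + a) / 8 ≤ (4 * a) / 8 := by
        apply ENNReal.div_le_div_right
        calc a + a + a ≤ a + a + (a + a) := by exact add_le_add le_rfl le_add_self
          _ = 4 * a := by ring
    _ = a / 2 := by
        rw [show (8 : ℝ≥0∞) = 4 * 2 by norm_num,
          ENNReal.mul_div_mul_left _ _ (by norm_num) (by norm_num)]

end AuxLemmas

theorem weight_pow_locally_integrable_of_algebra {G : Type*} [Group G] [TopologicalSpace G]
    [IsTopologicalGroup G] [LocallyCompactSpace G] [MeasurableSpace G] [BorelSpace G]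
    (μ : Measure G) [μ.IsHaarMeasure] (p : ℝ) (hp : 1 ≤ p)
    (w : G → ℝ) (hw : Measurable w) (hwpos : ∀ x, 0 < w x)
    (halg : ∀ f g : G → ℝ,
      MemLp (fun x => f x * w x) (ENNReal.ofReal p) μ →
      MemLp (fun x => g x * w x) (ENNReal.ofReal p) μ →
      MemLp (fun s => (∫ t, f t * g (t⁻¹ * s) ∂μ) * w s) (ENNReal.ofReal p) μ) :
    ∀ K : Set G, IsCompact K → (∫⁻ x in K, ENNReal.ofReal (w x ^ p) ∂μ) < ⊤ := by
  intro K hK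
  have hp0 : (0 : ℝ) < p := lt_of_lt_of_le one_pos hp
  have hp'0 : ENNReal.ofReal p ≠ 0 := by
    simp only [ne_eq, ENNReal.ofReal_eq_zero, not_le]; exact hp0
  have hp't : ENNReal.ofReal p ≠ ∞ := ENNReal.ofReal_ne_top
  have hp'r : (ENNReal.ofReal p).toReal = p := ENNReal.toReal_ofReal hp0.le
  have main : ∀ s₀ ∈ K, ∃ T : Set G, IsOpen T ∧ s₀ ∈ T ∧
      (∫⁻ x in T, ENNReal.ofReal (w x ^ p) ∂μ) < ⊤ := by
    intro s₀ hs₀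
    obtain ⟨L, hLc, hL1⟩ := exists_compact_mem_nhds (1 : G)
    set O : Set G := K * interior L with hO
    have hOopen : IsOpen O := IsOpen.mul_left isOpen_interior
    have hs₀O : s₀ ∈ O := ⟨s₀, hs₀, 1, mem_interior_iff_mem_nhds.mpr hL1, mul_one s₀⟩
    have hOsub : O ⊆ K * L := Set.mul_subset_mul_left interior_subset
    have hKL : IsCompact (K * L) := hK.mul hLc
    have hOpos : μ O ≠ 0 := hOopen.measure_ne_zero μ ⟨s₀, hs₀O⟩
    obtain ⟨M, hM⟩ : ∃ M : ℕ, μ (O ∩ {x | w x ≤ (M : ℝ)}) ≠ 0 := by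
      by_contra hcon
      push_neg at hcon
      apply hOpos
      have hOeq : O = ⋃ n : ℕ, O ∩ {x | w x ≤ (n : ℝ)} := by
        ext x
        simp only [mem_iUnion, mem_inter_iff, mem_setOf_eq]
        constructor
        · intro hx
          obtain ⟨n, hn⟩ := exists_nat_ge (w x)
          exact ⟨n, hx, hn⟩
        · rintro ⟨n, hx, -⟩; exact hx
      rw [hOeq]
      exact measure_iUnion_null fun n => by simpa using hcon n
    set P : Set G := O ∩ {x | w x ≤ (M : ℝ)} with hPdef
    have hPm : MeasurableSet P :=
      hOopen.measurableSet.inter (measurableSet_le hw measurable_const)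
    have hPsub : P ⊆ K * L := fun x hx => hOsub hx.1
    have hPclos : IsCompact (closure P) := hKL.closure_of_subset hPsub
    set m : ℝ≥0∞ := μ P with hm
    have hm0 : m ≠ 0 := hM
    have hmtop : m ≠ ∞ := (lt_of_le_of_lt (measure_mono hPsub) hKL.measure_lt_top).ne
    have h8 : m / 8 ≠ 0 := by
      simp [ENNReal.div_eq_zero_iff, hm0]
    have h2ne : m / 2 ≠ ∞ := (ENNReal.div_lt_top hmtop (by norm_num)).ne
    -- compact closed approximation of P from inside
    obtain ⟨C, hCP, hCc, hCcl, hCd⟩ := aux_inner μ hPm hPclos h8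
    -- neighborhood of 1 where translation moves C little
    have hevent : ∀ᶠ t in 𝓝 (1 : G), μ (t⁻¹ • C \ C) < m / 8 := by
      have h1 : Tendsto (fun t : G => t⁻¹) (𝓝 1) (𝓝 1) := by
        simpa using (continuous_inv.tendsto (1 : G))
      exact h1.eventually (aux_smul_diff μ hCc hCcl h8)
    obtain ⟨N, hNsub, hNopen, hN1⟩ := eventually_nhds_iff.mp hevent
    have hPdiff : ∀ t ∈ N, μ (P \ t • P) ≤ m / 8 + m / 8 := by
      intro t ht
      have hsub : P \ t • P ⊆ (P \ C) ∪ (C \ t • C) := by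
        intro x hx
        by_cases hxC : x ∈ C
        · exact Or.inr ⟨hxC, fun hxtC => hx.2 (smul_set_mono hCP hxtC)⟩
        · exact Or.inl ⟨hx.1, hxC⟩
      have hCtC : μ (C \ t • C) = μ (t⁻¹ • C \ C) := by
        have heq : C \ t • C = t • (t⁻¹ • C \ C) := by
          rw [smul_set_sdiff, smul_inv_smul]
        rw [heq, measure_smul]
      calc μ (P \ t • P) ≤ μ ((P \ C) ∪ (C \ t • C)) := measure_mono hsub
        _ ≤ μ (P \ C) + μ (C \ t • C) := measure_union_le _ _
        _ ≤ m / 8 + m / 8 := add_le_add hCd.le (by rw [hCtC]; exact (hNsub t ht).le)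
    -- the second factor set
    set F : Set G := s₀⁻¹ • P with hF
    have hFm : MeasurableSet F := hPm.const_smul s₀⁻¹
    have hFμ : μ F = m := by rw [hF, measure_smul]
    set Fn : ℕ → Set G := fun n => F ∩ {v | w v⁻¹ ≤ (n : ℝ)} with hFn
    have hFnm : ∀ n, MeasurableSet (Fn n) := fun n =>
      hFm.inter (measurableSet_le (hw.comp measurable_inv) measurable_const)
    obtain ⟨n, hn⟩ : ∃ n : ℕ, μ (F \ Fn n) < m / 8 := by
      have hmono : Antitone fun n : ℕ => F \ Fn n := by
        intro a b hab x hx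
        refine ⟨hx.1, fun hxa => hx.2 ⟨hxa.1, ?_⟩⟩
        exact le_trans hxa.2 ((Nat.cast_le (α := ℝ)).mpr hab)
      have hempty : (⋂ n, (F \ Fn n)) = ∅ := by
        ext x
        simp only [mem_iInter, mem_empty_iff_false, iff_false]
        intro hx
        obtain ⟨n, hn⟩ := exists_nat_ge (w x⁻¹)
        exact (hx n).2 ⟨(hx n).1, hn⟩
      have htend := tendsto_measure_iInter_atTop (μ := μ)
        (fun n => (hFm.diff (hFnm n)).nullMeasurableSet) hmono
        ⟨0, by
          refine (lt_of_le_of_lt (measure_mono diff_subset) ?_).ne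
          rw [hFμ]; exact hmtop.lt_top⟩
      rw [hempty, measure_empty] at htend
      exact (htend.eventually_lt_const (pos_iff_ne_zero.mpr h8)).exists
    set E : Set G := (Fn n)⁻¹ with hE
    have hEm : MeasurableSet E := (hFnm n).inv
    have hEsub : E ⊆ (K * L)⁻¹ * {s₀} := by
      intro x hx
      have hxF : x⁻¹ ∈ F := (Set.mem_inv.mp hx).1
      obtain ⟨y, hyP, hyx⟩ := hxF
      have hxeq : x = y⁻¹ * s₀ := by
        have : x⁻¹ = s₀⁻¹ * y := hyx.symm
        rw [← inv_inv x, this, mul_inv_rev, inv_inv]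
      rw [hxeq]
      exact ⟨y⁻¹, Set.inv_mem_inv.mpr (hPsub hyP), s₀, rfl, rfl⟩
    have hEfin : μ E ≠ ∞ := by
      refine (lt_of_le_of_lt (measure_mono hEsub) ?_).ne
      exact (hKL.inv.mul isCompact_singleton).measure_lt_top
    have hEbound : ∀ x ∈ E, w x ≤ (n : ℝ) := by
      intro x hx
      have := (Set.mem_inv.mp hx).2
      simpa using this
    -- the two functions
    set f : G → ℝ := P.indicator fun _ => (1 : ℝ) with hfdef
    set g : G → ℝ := E.indicator fun _ => (1 : ℝ) with hgdef
    have hindicator_mem : ∀ (S : Set G) (B : ℝ), MeasurableSet S → μ S ≠ ∞ →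
        (∀ x ∈ S, w x ≤ B) →
        MemLp (fun x => (S.indicator fun _ => (1 : ℝ)) x * w x) (ENNReal.ofReal p) μ := by
      intro S B hSm hSfin hB
      have heq : (fun x => (S.indicator fun _ => (1 : ℝ)) x * w x) = S.indicator w := by
        funext x
        by_cases hx : x ∈ S <;>
          simp [Set.indicator_of_mem, Set.indicator_of_notMem, hx]
      rw [heq]
      refine MemLp.of_le (memLp_indicator_const (ENNReal.ofReal p) hSm B (Or.inr hSfin))
        ((hw.indicator hSm).aestronglyMeasurable) ?_
      filter_upwards with x
      by_cases hx : x ∈ S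
      · simp only [Set.indicator_of_mem hx, Real.norm_eq_abs]
        rw [abs_of_nonneg (hwpos x).le]
        exact le_trans (hB x hx) (le_abs_self B)
      · simp [Set.indicator_of_notMem hx]
    have hf : MemLp (fun x => f x * w x) (ENNReal.ofReal p) μ :=
      hindicator_mem P (M : ℝ) hPm hmtop (fun x hx => hx.2)
    have hg : MemLp (fun x => g x * w x) (ENNReal.ofReal p) μ :=
      hindicator_mem E (n : ℝ) hEm hEfin hEbound
    -- measurable sets for the convolution values
    have hSm : ∀ s : G, MeasurableSet (P ∩ (fun t => t⁻¹ * s) ⁻¹' E) := fun s =>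
      hPm.inter ((measurable_inv.mul_const s) hEm)
    have hconv : ∀ s : G, (∫ t, f t * g (t⁻¹ * s) ∂μ) = (μ (P ∩ (fun t => t⁻¹ * s) ⁻¹' E)).toReal := by
      intro s
      have heq : (fun t => f t * g (t⁻¹ * s)) =
          (P ∩ (fun t => t⁻¹ * s) ⁻¹' E).indicator fun _ => (1 : ℝ) := by
        funext t
        by_cases h1 : t ∈ P <;> by_cases h2 : t⁻¹ * s ∈ E <;>
          simp [hfdef, hgdef, Set.indicator_of_mem, Set.indicator_of_notMem, h1, h2,
            Set.indicator_apply, Set.mem_inter_iff, Set.mem_preimage]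
      rw [heq, integral_indicator_const (1 : ℝ) (hSm s), smul_eq_mul, mul_one, measureReal_def]
    have hSeq : ∀ s : G, P ∩ (fun t => t⁻¹ * s) ⁻¹' E = P ∩ s • Fn n := by
      intro s
      ext t
      simp only [mem_inter_iff, mem_preimage, hE, Set.mem_inv,
        mem_smul_set_iff_inv_smul_mem, smul_eq_mul, mul_inv_rev, inv_inv]
    -- lower bound for the convolution on N * {s₀}
    have hlow : ∀ s ∈ N * ({s₀} : Set G), m / 2 ≤ μ (P ∩ s • Fn n) := by
      rintro s ⟨t, htN, y, hy, rfl⟩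
      rw [show y = s₀ from hy]
      have hsF : (t * s₀) • F = t • P := by
        rw [hF, smul_smul, mul_assoc, mul_inv_cancel, mul_one]
      have hdecomp : P \ ((t * s₀) • Fn n) ⊆ (P \ t • P) ∪ ((t * s₀) • F \ (t * s₀) • Fn n) := by
        intro x hx
        by_cases hxF : x ∈ (t * s₀) • F
        · exact Or.inr ⟨hxF, hx.2⟩
        · refine Or.inl ⟨hx.1, fun hc => hxF ?_⟩
          rw [hsF]; exact hc
      have hμdec : μ (P \ ((t * s₀) • Fn n)) ≤ m / 2 := by
        calc μ (P \ ((t * s₀) • Fn n))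
            ≤ μ ((P \ t • P) ∪ ((t * s₀) • F \ (t * s₀) • Fn n)) := measure_mono hdecomp
          _ ≤ μ (P \ t • P) + μ ((t * s₀) • F \ (t * s₀) • Fn n) := measure_union_le _ _
          _ = μ (P \ t • P) + μ (F \ Fn n) := by rw [← smul_set_sdiff, measure_smul]
          _ ≤ (m / 8 + m / 8) + m / 8 := add_le_add (hPdiff t htN) hn.le
          _ ≤ m / 2 := aux_frac m
      have hPle : m ≤ μ (P ∩ (t * s₀) • Fn n) + m / 2 := by
        calc m = μ P := hm
          _ = μ ((P ∩ (t * s₀) • Fn n) ∪ (P \ ((t * s₀) • Fn n))) := by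
              rw [Set.inter_union_diff]
          _ ≤ μ (P ∩ (t * s₀) • Fn n) + μ (P \ ((t * s₀) • Fn n)) := measure_union_le _ _
          _ ≤ μ (P ∩ (t * s₀) • Fn n) + m / 2 := add_le_add_right hμdec _
      have h2 : m / 2 + m / 2 ≤ μ (P ∩ (t * s₀) • Fn n) + m / 2 := by
        rw [ENNReal.add_halves]; exact hPle
      exact (ENNReal.add_le_add_iff_right h2ne).mp h2
    -- positivity of the lower bound
    set c₀ : ℝ := (m / 2).toReal with hc₀
    have hc₀pos : 0 < c₀ := ENNReal.toReal_pos (by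
      simp only [ne_eq, ENNReal.div_eq_zero_iff, not_or]
      exact ⟨hm0, by norm_num⟩) h2ne
    -- the convolution is in ℒp
    have hmem := halg f g hf hg
    have hint : (∫⁻ x, (‖(∫ t, f t * g (t⁻¹ * x) ∂μ) * w x‖₊ : ℝ≥0∞) ^ p ∂μ) < ∞ := by
      have h := lintegral_rpow_enorm_lt_top_of_eLpNorm_lt_top hp'0 hp't hmem.2
      rwa [hp'r] at h
    refine ⟨N * ({s₀} : Set G), hNopen.mul_right, ⟨1, hN1, s₀, rfl, one_mul s₀⟩, ?_⟩
    -- pointwise bound on the target set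
    have hpb : ∀ s ∈ N * ({s₀} : Set G), ENNReal.ofReal (w s ^ p) ≤
        ENNReal.ofReal (c₀⁻¹ ^ p) *
          (‖(∫ t, f t * g (t⁻¹ * s) ∂μ) * w s‖₊ : ℝ≥0∞) ^ p := by
      intro s hs
      set A : ℝ := ∫ t, f t * g (t⁻¹ * s) ∂μ with hA
      have hSfin : μ (P ∩ s • Fn n) ≠ ∞ :=
        (lt_of_le_of_lt (measure_mono Set.inter_subset_left) hmtop.lt_top).ne
      have hcs : c₀ ≤ A := by
        rw [hA, hconv s, hSeq s, hc₀]
        exact (ENNReal.toReal_le_toReal h2ne hSfin).mpr (hlow s hs)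
      have hwle : w s ≤ c₀⁻¹ * |A * w s| := by
        have h1 : c₀ * w s ≤ A * w s := mul_le_mul_of_nonneg_right hcs (hwpos s).le
        have h2 : A * w s ≤ |A * w s| := le_abs_self _
        have h3 : c₀ * w s ≤ |A * w s| := le_trans h1 h2
        calc w s = c₀⁻¹ * (c₀ * w s) := by
              rw [← mul_assoc, inv_mul_cancel₀ hc₀pos.ne', one_mul]
          _ ≤ c₀⁻¹ * |A * w s| :=
              mul_le_mul_of_nonneg_left h3 (inv_nonneg.mpr hc₀pos.le)
      have h1 : w s ^ p ≤ (c₀⁻¹ * |A * w s|) ^ p :=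
        Real.rpow_le_rpow (hwpos s).le hwle hp0.le
      have h2 : (c₀⁻¹ * |A * w s|) ^ p = c₀⁻¹ ^ p * |A * w s| ^ p :=
        Real.mul_rpow (inv_nonneg.mpr hc₀pos.le) (abs_nonneg _)
      calc ENNReal.ofReal (w s ^ p) ≤ ENNReal.ofReal (c₀⁻¹ ^ p * |A * w s| ^ p) :=
            ENNReal.ofReal_le_ofReal (h2 ▸ h1)
        _ = ENNReal.ofReal (c₀⁻¹ ^ p) * ENNReal.ofReal (|A * w s| ^ p) :=
            ENNReal.ofReal_mul (Real.rpow_nonneg (inv_nonneg.mpr hc₀pos.le) p)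
        _ = ENNReal.ofReal (c₀⁻¹ ^ p) * (‖A * w s‖₊ : ℝ≥0∞) ^ p := by
            rw [← ENNReal.ofReal_rpow_of_nonneg (abs_nonneg _) hp0.le]
            congr 1
            rw [← Real.norm_eq_abs, ofReal_norm_eq_enorm, enorm_eq_nnnorm]
    calc (∫⁻ x in N * ({s₀} : Set G), ENNReal.ofReal (w x ^ p) ∂μ)
        ≤ ∫⁻ x in N * ({s₀} : Set G), ENNReal.ofReal (c₀⁻¹ ^ p) *
            (‖(∫ t, f t * g (t⁻¹ * x) ∂μ) * w x‖₊ : ℝ≥0∞) ^ p ∂μ := by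
          apply lintegral_mono_ae
          filter_upwards [ae_restrict_mem (hNopen.mul_right).measurableSet] with x hx
          exact hpb x hx
      _ = ENNReal.ofReal (c₀⁻¹ ^ p) * ∫⁻ x in N * ({s₀} : Set G),
            (‖(∫ t, f t * g (t⁻¹ * x) ∂μ) * w x‖₊ : ℝ≥0∞) ^ p ∂μ :=
          lintegral_const_mul' _ _ ENNReal.ofReal_ne_top
      _ ≤ ENNReal.ofReal (c₀⁻¹ ^ p) * ∫⁻ x,
            (‖(∫ t, f t * g (t⁻¹ * x) ∂μ) * w x‖₊ : ℝ≥0∞) ^ p ∂μ :=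
          mul_le_mul_right (setLIntegral_le_lintegral _ _) _
      _ < ⊤ := ENNReal.mul_lt_top ENNReal.ofReal_lt_top hint
  -- conclude by compactness
  choose T hTopen hTmem hTfin using main
  obtain ⟨t, hcover⟩ := hK.elim_nhds_subcover' (fun x hx => T x hx)
    (fun x hx => (hTopen x hx).mem_nhds (hTmem x hx))
  have hcover' : K ⊆ ⋃ i : {x // x ∈ t}, T i.1 i.1.2 := by
    intro x hx
    obtain ⟨i, hi, hxi⟩ := Set.mem_iUnion₂.mp (hcover hx)
    exact Set.mem_iUnion.mpr ⟨⟨i, hi⟩, hxi⟩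
  calc (∫⁻ x in K, ENNReal.ofReal (w x ^ p) ∂μ)
      ≤ ∫⁻ x in ⋃ i : {x // x ∈ t}, T i.1 i.1.2, ENNReal.ofReal (w x ^ p) ∂μ :=
        lintegral_mono_set hcover'
    _ ≤ ∑' i : {x // x ∈ t}, ∫⁻ x in T i.1 i.1.2, ENNReal.ofReal (w x ^ p) ∂μ :=
        lintegral_iUnion_le _ _
    _ < ⊤ := by
        rw [tsum_fintype]
        exact ENNReal.sum_lt_top.mpr fun i _ => hTfin i.1 i.1.2
end

section
/- Let G be a locally compact group and L : G → (0,∞) a measurable submultiplicative function, i.e. L(st) ≤ L(s)L(t) for all s,t ∈ G. Then L is bounded above and bounded away from zero on every compact subset of G. -/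
open MeasureTheory Measure Set Pointwise Filter Topology

lemma steinhaus_finite' {G : Type*} [Group G] [TopologicalSpace G] [IsTopologicalGroup G]
    [LocallyCompactSpace G] [MeasurableSpace G] [BorelSpace G]
    (μ : Measure G) [IsHaarMeasure μ] [InnerRegularCompactLTTop μ]
    (E : Set G) (hE : MeasurableSet E) (hEpos : 0 < μ E) (hEfin : μ E ≠ ⊤) :
    E / E ∈ 𝓝 (1 : G) := by
  obtain ⟨K, hKE, hK, K_closed, hKpos⟩ :
      ∃ K, K ⊆ E ∧ IsCompact K ∧ IsClosed K ∧ 0 < μ K := by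
    rcases hE.exists_lt_isCompact_of_ne_top hEfin hEpos with ⟨K, KE, K_comp, K_meas⟩
    refine ⟨closure K, ?_, K_comp.closure, isClosed_closure, ?_⟩
    · exact K_comp.closure_subset_measurableSet hE KE
    · rwa [K_comp.measure_closure]
  filter_upwards [eventually_nhds_one_measure_smul_diff_lt hK K_closed hKpos.ne' (μ := μ)] with g hg
  have : ¬Disjoint (g • K) K := fun hd ↦ by
    rw [hd.symm.sdiff_eq_right, measure_smul] at hg
    exact hg.false
  rcases Set.not_disjoint_iff.1 this with ⟨_, ⟨x, hxK, rfl⟩, hgxK⟩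
  simpa using div_mem_div (hKE hgxK) (hKE hxK)

lemma aux_upper {G : Type*} [Group G] [TopologicalSpace G]
    [IsTopologicalGroup G] [LocallyCompactSpace G] [MeasurableSpace G] [BorelSpace G]
    (L : G → ℝ) (hL : Measurable L) (hpos : ∀ x, 0 < L x)
    (hsub : ∀ s t : G, L (s * t) ≤ L s * L t)
    (K : Set G) (hK : IsCompact K) : ∃ C : ℝ, 0 < C ∧ ∀ x ∈ K, L x ≤ C := by
  classical
  set μ := Measure.haar (G := G) with hμ
  obtain ⟨V, hVc, hV⟩ := exists_compact_mem_nhds (1 : G)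
  set U := interior V with hU
  have hUopen : IsOpen U := isOpen_interior
  have hUne : (1 : G) ∈ U := mem_interior_iff_mem_nhds.2 hV
  have hUpos : 0 < μ U := hUopen.measure_pos μ ⟨1, hUne⟩
  have hUfin : μ U ≠ ⊤ :=
    ((measure_mono interior_subset).trans_lt hVc.measure_lt_top).ne
  set En : ℕ → Set G := fun n => {x | L x ≤ n ∧ L x⁻¹ ≤ n} with hEn
  have hEnm : ∀ n, MeasurableSet (En n) := fun n =>
    (measurableSet_le hL measurable_const).inter
      (measurableSet_le (hL.comp measurable_inv) measurable_const)
  have hcov : U = ⋃ n, U ∩ En n := by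
    ext x
    simp only [mem_iUnion, mem_inter_iff, hEn, mem_setOf_eq]
    refine ⟨fun hx => ⟨⌈max (L x) (L x⁻¹)⌉₊, hx, ?_, ?_⟩, fun ⟨n, hn, _⟩ => hn⟩
    · exact (le_max_left _ _).trans (Nat.le_ceil _)
    · exact (le_max_right _ _).trans (Nat.le_ceil _)
  have : ∃ n, 0 < μ (U ∩ En n) := by
    by_contra h
    push_neg at h
    simp only [le_zero_iff] at h
    have : μ U = 0 := by
      rw [hcov]
      exact measure_iUnion_null h
    exact hUpos.ne' this
  obtain ⟨n, hn⟩ := this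
  set E := U ∩ En n with hE
  have hEmeas : MeasurableSet E := hUopen.measurableSet.inter (hEnm n)
  have hEfin : μ E ≠ ⊤ :=
    ((measure_mono inter_subset_left).trans_lt hUfin.lt_top).ne
  have hst : E / E ∈ 𝓝 (1 : G) := steinhaus_finite' μ E hEmeas hn hEfin
  have hbound : ∀ y ∈ E / E, L y ≤ (n : ℝ) * n := by
    rintro y hy
    obtain ⟨a, ha, b, hb, rfl⟩ := hy
    have h1 : L a ≤ n := ha.2.1
    have h2 : L b⁻¹ ≤ n := hb.2.2
    calc L (a / b) = L (a * b⁻¹) := by rw [div_eq_mul_inv]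
    _ ≤ L a * L b⁻¹ := hsub _ _
    _ ≤ (n : ℝ) * n := mul_le_mul h1 h2 (hpos b⁻¹).le ((hpos a).le.trans h1)
  obtain ⟨W, hWsub, hWopen, hW1⟩ := mem_nhds_iff.1 hst
  obtain ⟨t, htK, htcov⟩ := hK.elim_nhds_subcover (fun x => x • W)
    (fun x _ => (hWopen.smul x).mem_nhds ⟨1, hW1, mul_one x⟩)
  have hsumnn : (0:ℝ) ≤ ∑ z ∈ t, L z * ((n : ℝ) * n) :=
    Finset.sum_nonneg fun z _ => mul_nonneg (hpos z).le (by positivity)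
  refine ⟨1 + ∑ x ∈ t, L x * ((n : ℝ) * n), by linarith, fun y hy => ?_⟩
  obtain ⟨x, hxt, hyx⟩ := by simpa using htcov hy
  obtain ⟨w, hw, rfl⟩ := hyx
  have h1 : L (x * w) ≤ L x * ((n : ℝ) * n) := by
    calc L (x * w) ≤ L x * L w := hsub _ _
    _ ≤ L x * ((n : ℝ) * n) := by
        have := (hpos x).le
        gcongr
        exact hbound w (hWsub hw)
  have h2 : L x * ((n : ℝ) * n) ≤ ∑ z ∈ t, L z * ((n : ℝ) * n) :=
    Finset.single_le_sum (fun z _ => by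
      have h0 : (0:ℝ) ≤ (n : ℝ) * n := by positivity
      exact mul_nonneg (hpos z).le h0) hxt
  simp only [smul_eq_mul]
  linarith

theorem submultiplicative_bounded_on_compact {G : Type*} [Group G] [TopologicalSpace G]
    [IsTopologicalGroup G] [LocallyCompactSpace G] [MeasurableSpace G] [BorelSpace G]
    (L : G → ℝ) (hL : Measurable L) (hpos : ∀ x, 0 < L x)
    (hsub : ∀ s t : G, L (s * t) ≤ L s * L t) :
    ∀ K : Set G, IsCompact K → ∃ a b : ℝ, 0 < a ∧ ∀ x ∈ K, a ≤ L x ∧ L x ≤ b := by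
  intro K hK
  obtain ⟨b, hb, hub⟩ := aux_upper L hL hpos hsub K hK
  obtain ⟨c, hc, hub'⟩ := aux_upper L hL hpos hsub K⁻¹ hK.inv
  refine ⟨L 1 / c, b, div_pos (hpos 1) hc, fun x hx => ⟨?_, hub x hx⟩⟩
  have h1 : L 1 ≤ L x * L x⁻¹ := by
    simpa using hsub x x⁻¹
  have h2 : L x⁻¹ ≤ c := hub' x⁻¹ (Set.inv_mem_inv.2 hx)
  rw [div_le_iff₀ hc]
  calc L 1 ≤ L x * L x⁻¹ := h1
  _ ≤ L x * c := by have := (hpos x).le; gcongr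
end

section
/- Let G be a locally compact group with left Haar measure and w : G → (0,∞) a measurable weight. Define L_s = ess sup_t w(st)/w(t). If the set S = {s ∈ G : L_s < ∞} has locally full measure (its complement is locally null), then S = G, i.e. L_s < ∞ for every s ∈ G. -/
open MeasureTheory ENNReal Set

section Aux

variable {G : Type*} [Group G] [TopologicalSpace G] [IsTopologicalGroup G]
    [LocallyCompactSpace G] [MeasurableSpace G] [BorelSpace G]

/-- Core lemma: for a regular Haar measure, a null set contained in a compact set has
null inverse. -/
lemma aux_inv_null_of_null (μ : Measure G) [μ.IsHaarMeasure] [μ.Regular] {B L : Set G}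
    (hL : IsCompact L) (hBL : B ⊆ L) (hB : μ B = 0) : μ.inv B = 0 := by
  rcases B.eq_empty_or_nonempty with h | hBne
  · simp [h]
  set ν := μ.inv with hν
  obtain ⟨g, g_comp, g_nonneg, g_one⟩ := exists_continuous_nonneg_pos (1 : G)
  set c := ∫ x, g x ∂μ with hc
  have c_pos : 0 < c :=
    g.continuous.integral_pos_of_hasCompactSupport_nonneg_nonzero g_comp g_nonneg g_one
  set D : G → ℝ := fun x => ∫ y, g (y⁻¹ * x) ∂ν with hD
  have D_cont : Continuous D := continuous_integral_apply_inv_mul g.continuous g_comp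
  have D_pos : ∀ x, 0 < D x := by
    intro x
    have C : Continuous fun y => g (y⁻¹ * x) :=
      g.continuous.comp (continuous_inv.mul continuous_const)
    apply (integral_pos_iff_support_of_nonneg (fun y => g_nonneg (y⁻¹ * x)) ?_).2
    · exact C.isOpen_support.measure_pos ν ⟨x, by simpa using g_one⟩
    · exact C.integrable_of_hasCompactSupport
        (g_comp.comp_homeomorph ((Homeomorph.inv G).trans (Homeomorph.mulRight x)))
  have key : ∀ f : G → ℝ, Continuous f → HasCompactSupport f →
      ∫ x, f x ∂ν = (∫ x, f x * D x ∂μ) / c := by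
    intro f f_cont f_comp
    have h := Measure.integral_isMulLeftInvariant_isMulRightInvariant_combo (μ := μ) (ν := ν)
      (f := fun x => f x * D x) (f_cont.mul D_cont) f_comp.mul_right
      g.continuous g_comp g_nonneg g_one
    rw [eq_div_iff c_pos.ne', h, ← hc]
    congr 1
    apply integral_congr_ae
    filter_upwards with y
    show f y = f y * D y * (D y)⁻¹
    rw [mul_assoc, mul_inv_cancel₀ (D_pos y).ne', mul_one]
  obtain ⟨L', L'_comp, hLL'⟩ := exists_compact_superset hL
  set V := interior L' with hV
  have V_open : IsOpen V := isOpen_interior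
  have hBV : B ⊆ V := hBL.trans hLL'
  have Vbar_comp : IsCompact (closure V) :=
    L'_comp.closure.of_isClosed_subset isClosed_closure (closure_mono interior_subset)
  have ne : (closure V).Nonempty := hBne.mono (hBV.trans subset_closure)
  obtain ⟨x₀M, -, hM⟩ := Vbar_comp.exists_isMaxOn ne D_cont.continuousOn
  set M := D x₀M with hMdef
  have M_pos : 0 < M := D_pos _
  have main : ∀ ε : ℝ, 0 < ε → ν B ≤ ENNReal.ofReal (M / c * ε) := by
    intro ε εpos
    obtain ⟨U₀, hBU₀, U₀_open, hU₀⟩ : ∃ U₀ ⊇ B, IsOpen U₀ ∧ μ U₀ < ENNReal.ofReal ε := by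
      apply Set.exists_isOpen_lt_of_lt
      rw [hB]
      exact ENNReal.ofReal_pos.2 εpos
    set U := U₀ ∩ V with hU
    have U_open : IsOpen U := U₀_open.inter V_open
    have hBU : B ⊆ U := subset_inter hBU₀ hBV
    have hμU : μ U < ENNReal.ofReal ε := lt_of_le_of_lt (measure_mono inter_subset_left) hU₀
    have compact_bound : ∀ K' : Set G, K' ⊆ U → IsCompact K' →
        ν K' ≤ ENNReal.ofReal (M / c * ε) := by
      intro K' hK'U K'_comp
      obtain ⟨f, f_one, f_zero, f_comp, f_mem⟩ :=
        exists_continuous_one_zero_of_isCompact K'_comp U_open.isClosed_compl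
          (disjoint_compl_right_iff_subset.2 hK'U)
      have f_nonneg : ∀ x, 0 ≤ f x := fun x => (f_mem x).1
      have f_le_one : ∀ x, f x ≤ 1 := fun x => (f_mem x).2
      have f_int_ν : Integrable (⇑f) ν := f.continuous.integrable_of_hasCompactSupport f_comp
      have step1 : ν K' ≤ ENNReal.ofReal (∫ x, f x ∂ν) := by
        rw [MeasureTheory.ofReal_integral_eq_lintegral_ofReal f_int_ν
          (Filter.Eventually.of_forall f_nonneg)]
        calc ν K' ≤ ν {x | 1 ≤ ENNReal.ofReal (f x)} := by
              apply measure_mono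
              intro x hx
              simp [Set.mem_setOf_eq, f_one hx]
          _ = 1 * ν {x | 1 ≤ ENNReal.ofReal (f x)} := (one_mul _).symm
          _ ≤ ∫⁻ x, ENNReal.ofReal (f x) ∂ν :=
              mul_meas_ge_le_lintegral₀
                (f.continuous.measurable.ennreal_ofReal.aemeasurable) 1
      have step2 : ∫ x, f x * D x ∂μ ≤ M * (μ U).toReal := by
        have hle : ∀ x, f x * D x ≤ U.indicator (fun _ => M) x := by
          intro x
          by_cases hx : x ∈ U
          · rw [Set.indicator_of_mem hx]
            have hDx : D x ≤ M := hM (subset_closure (hU ▸ hx).2)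
            calc f x * D x ≤ 1 * M :=
                  mul_le_mul (f_le_one x) hDx (D_pos x).le zero_le_one
              _ = M := one_mul M
          · rw [Set.indicator_of_notMem hx]
            have : f x = 0 := f_zero hx
            simp [this]
        have int1 : Integrable (fun x => f x * D x) μ :=
          (f.continuous.mul D_cont).integrable_of_hasCompactSupport f_comp.mul_right
        have int2 : Integrable (U.indicator fun _ => M) μ := by
          rw [integrable_indicator_iff U_open.measurableSet]
          exact integrableOn_const (hμU.trans_le le_top).ne
        calc ∫ x, f x * D x ∂μ ≤ ∫ x, U.indicator (fun _ => M) x ∂μ :=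
              integral_mono int1 int2 hle
          _ = (μ U).toReal • M := by
              rw [integral_indicator U_open.measurableSet, setIntegral_const]; rfl
          _ = M * (μ U).toReal := by rw [smul_eq_mul, mul_comm]
      have toRealU : (μ U).toReal ≤ ε :=
        ENNReal.toReal_le_of_le_ofReal εpos.le hμU.le
      calc ν K' ≤ ENNReal.ofReal (∫ x, f x ∂ν) := step1
        _ = ENNReal.ofReal ((∫ x, f x * D x ∂μ) / c) := by
            rw [key f f.continuous f_comp]
        _ ≤ ENNReal.ofReal (M / c * ε) := by
            apply ENNReal.ofReal_le_ofReal
            rw [div_le_iff₀ c_pos, show M / c * ε * c = M * ε by field_simp]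
            calc (∫ x, f x * D x ∂μ) ≤ M * (μ U).toReal := step2
              _ ≤ M * ε := mul_le_mul_of_nonneg_left toRealU M_pos.le
    have hνU : ν U ≤ ENNReal.ofReal (M / c * ε) := by
      by_contra hcon
      push_neg at hcon
      obtain ⟨K', hK'U, K'_comp, hK'⟩ :=
        (MeasureTheory.Measure.Regular.innerRegular (μ := ν)) U_open _ hcon
      exact absurd (compact_bound K' hK'U K'_comp) (not_le.2 hK')
    exact le_trans (measure_mono hBU) hνU
  refine le_antisymm ?_ zero_le
  refine ENNReal.le_of_forall_pos_le_add fun δ hδ _ => ?_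
  rw [zero_add]
  have hδ' : (0 : ℝ) < (δ : ℝ) * c / M := by positivity
  calc ν B ≤ ENNReal.ofReal (M / c * ((δ : ℝ) * c / M)) := main _ hδ'
    _ = ENNReal.ofReal (δ : ℝ) := by
        congr 1
        field_simp
    _ = (δ : ℝ≥0∞) := ENNReal.ofReal_coe_nnreal

/-- Locally null sets have locally null inverses, for an arbitrary Haar measure. -/
lemma aux_locally_null_inv (μ : Measure G) [μ.IsHaarMeasure] {A : Set G}
    (hA : ∀ K : Set G, IsCompact K → μ (K ∩ A) = 0)
    {K : Set G} (hK : IsCompact K) : μ (K ∩ A⁻¹) = 0 := by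
  set ρ : Measure G := MeasureTheory.Measure.haar with hρ
  have trans : ∀ T : Set G, IsCompact (closure T) → (μ T = 0 ↔ ρ T = 0) := by
    intro T hT
    have h1 := Measure.measure_isMulInvariant_eq_smul_of_isCompact_closure μ ρ hT
    have hcpos : 0 < Measure.haarScalarFactor μ ρ :=
      Measure.haarScalarFactor_pos_of_isHaarMeasure μ ρ
    constructor
    · intro h
      rw [h, ENNReal.smul_def, smul_eq_mul] at h1
      rcases mul_eq_zero.1 h1.symm with h' | h'
      · exact absurd (ENNReal.coe_eq_zero.1 h') hcpos.ne'
      · exact h'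
    · intro h
      rw [h1, h, smul_zero]
  have clos_compact : ∀ (K' A' : Set G), IsCompact K' → IsCompact (closure (K' ∩ A')) := by
    intro K' A' hK'
    exact hK'.closure.of_isClosed_subset isClosed_closure
      (closure_mono inter_subset_left)
  have hAρ : ∀ K' : Set G, IsCompact K' → ρ (K' ∩ A) = 0 := fun K' hK' =>
    (trans _ (clos_compact K' A hK')).1 (hA K' hK')
  have hBρ : ρ (K⁻¹ ∩ A) = 0 := hAρ K⁻¹ hK.inv
  have hinv : ρ.inv (K⁻¹ ∩ A) = 0 :=
    aux_inv_null_of_null ρ hK.inv inter_subset_left hBρ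
  have : ρ (K ∩ A⁻¹) = 0 := by
    rw [Measure.inv_apply] at hinv
    convert hinv using 2
    rw [Set.inter_inv, inv_inv]
  exact (trans _ (clos_compact K A⁻¹ hK)).2 this

/-- Submultiplicativity: the set of `s` with finite essential supremum is closed under
multiplication. -/
lemma aux_mem_mul (μ : Measure G) [μ.IsHaarMeasure] (w : G → ℝ) (hw : Measurable w)
    (hwpos : ∀ x, 0 < w x) {s t : G}
    (hs : essSup (fun x => ENNReal.ofReal (w (s * x) / w x)) μ < ⊤)
    (ht : essSup (fun x => ENNReal.ofReal (w (t * x) / w x)) μ < ⊤) :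
    essSup (fun x => ENNReal.ofReal (w (s * t * x) / w x)) μ < ⊤ := by
  set F : G → ℝ≥0∞ := fun x => ENNReal.ofReal (w (s * x) / w x) with hF
  set Gf : G → ℝ≥0∞ := fun x => ENNReal.ofReal (w (t * x) / w x) with hG
  have hFmeas : Measurable F :=
    ((hw.comp (measurable_const_mul s)).div hw).ennreal_ofReal
  have split : (fun x => ENNReal.ofReal (w (s * t * x) / w x)) =
      (fun x => F (t * x)) * Gf := by
    funext x
    simp only [Pi.mul_apply, hF, hG]
    rw [← ENNReal.ofReal_mul (div_nonneg (hwpos _).le (hwpos _).le)]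
    congr 1
    rw [mul_assoc, div_mul_div_cancel₀ (hwpos (t * x)).ne']
  have comp_eq : essSup (fun x => F (t * x)) μ = essSup F μ := by
    have hmp : Measure.map (fun x => t * x) μ = μ := map_mul_left_eq_self μ t
    have := essSup_map_measure (f := fun x => t * x) (g := F)
      (by rw [hmp]; exact hFmeas.aemeasurable) (measurable_const_mul t).aemeasurable
    rw [hmp] at this
    exact this.symm
  rw [split]
  calc essSup ((fun x => F (t * x)) * Gf) μ
      ≤ essSup (fun x => F (t * x)) μ * essSup Gf μ := ENNReal.essSup_mul_le _ _
    _ = essSup F μ * essSup Gf μ := by rw [comp_eq]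
    _ < ⊤ := ENNReal.mul_lt_top hs ht

end Aux

theorem moderate_locally_ae_implies_everywhere {G : Type*} [Group G] [TopologicalSpace G]
    [IsTopologicalGroup G] [LocallyCompactSpace G] [MeasurableSpace G] [BorelSpace G]
    (μ : Measure G) [μ.IsHaarMeasure] (w : G → ℝ) (hw : Measurable w)
    (hwpos : ∀ x, 0 < w x)
    (S : Set G)
    (hS : S = {s : G | essSup (fun t => ENNReal.ofReal (w (s * t) / w t)) μ < ⊤})
    (hfull : ∀ K : Set G, IsCompact K → μ (K ∩ Sᶜ) = 0) :
    S = Set.univ := by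
  ext g
  simp only [Set.mem_univ, iff_true]
  obtain ⟨V, V_comp, V_mem⟩ := exists_compact_mem_nhds (1 : G)
  have hVpos : 0 < μ V := μ.measure_pos_of_mem_nhds V_mem
  have h1 : μ (V ∩ Sᶜ) = 0 := hfull V V_comp
  -- the second bad set: {x | x⁻¹ * g ∉ S}
  have h2 : μ (V ∩ {x : G | x⁻¹ * g ∈ Sᶜ}) = 0 := by
    have eq1 : V ∩ {x : G | x⁻¹ * g ∈ Sᶜ} =
        (fun x => g⁻¹ * x) ⁻¹' (((fun x => g⁻¹ * x) '' V) ∩ (Sᶜ)⁻¹) := by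
      ext x
      simp only [Set.mem_inter_iff, Set.mem_setOf_eq, Set.mem_preimage, Set.mem_image,
        Set.mem_inv]
      constructor
      · rintro ⟨hxV, hxS⟩
        refine ⟨⟨x, hxV, rfl⟩, ?_⟩
        simpa [mul_inv_rev] using hxS
      · rintro ⟨⟨y, hyV, hy⟩, hxS⟩
        have hyx : y = x := mul_left_cancel hy
        subst hyx
        refine ⟨hyV, ?_⟩
        simpa [mul_inv_rev] using hxS
    rw [eq1, measure_preimage_mul]
    exact aux_locally_null_inv μ (fun K hK => by
        simpa [Set.inter_comm] using hfull K hK)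
      (V_comp.image (continuous_mul_left g⁻¹))
  have hcover : μ (V ∩ (S ∩ {x : G | x⁻¹ * g ∈ S})) ≠ 0 := by
    intro hzero
    have : μ V ≤ μ (V ∩ (S ∩ {x : G | x⁻¹ * g ∈ S})) + (μ (V ∩ Sᶜ)
        + μ (V ∩ {x : G | x⁻¹ * g ∈ Sᶜ})) := by
      refine le_trans (measure_mono ?_) (le_trans (measure_union_le _ _)
        (add_le_add le_rfl (measure_union_le _ _)))
      intro x hxV
      by_cases hxS : x ∈ S
      · by_cases hxg : x⁻¹ * g ∈ S
        · exact Or.inl ⟨hxV, hxS, hxg⟩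
        · exact Or.inr (Or.inr ⟨hxV, hxg⟩)
      · exact Or.inr (Or.inl ⟨hxV, hxS⟩)
    rw [hzero, h1, h2] at this
    simp at this
    exact hVpos.ne' this
  obtain ⟨x, hxV, hxS, hxg⟩ : ∃ x, x ∈ V ∧ x ∈ S ∧ x⁻¹ * g ∈ S := by
    obtain ⟨x, hx⟩ := nonempty_of_measure_ne_zero hcover
    exact ⟨x, hx.1, hx.2.1, hx.2.2⟩
  have hg : g = x * (x⁻¹ * g) := by group
  rw [hS] at hxS hxg ⊢
  simp only [Set.mem_setOf_eq] at hxS hxg ⊢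
  have := aux_mem_mul μ w hw hwpos hxS hxg
  rw [← hg] at this
  exact this
end

section
/- Let G be a locally compact group with left Haar measure, A, B ⊆ G measurable sets with A of finite positive measure, and s, t ∈ G. Then pointwise μ(A) · 1_{stB} ≤ 1_{sA} * 1_{A⁻¹tB}, where * is convolution with respect to left Haar measure. -/
open MeasureTheory ENNReal Pointwise

theorem indicator_convolution_lower_bound {G : Type*} [Group G] [TopologicalSpace G]
    [IsTopologicalGroup G] [LocallyCompactSpace G] [MeasurableSpace G] [BorelSpace G]
    (μ : Measure G) [μ.IsHaarMeasure] (A B : Set G)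
    (hA : MeasurableSet A) (hB : MeasurableSet B)
    (hA0 : 0 < μ A) (hAfin : μ A < ⊤) (s t : G) :
    ∀ x : G, (μ A).toReal * Set.indicator ((s * t) • B) (fun _ => (1 : ℝ)) x ≤
      ∫ r, Set.indicator (s • A) (fun _ => (1 : ℝ)) r *
        Set.indicator (A⁻¹ * t • B) (fun _ => (1 : ℝ)) (r⁻¹ * x) ∂μ := by
  intro x
  by_cases hx : x ∈ (s * t) • B
  · rw [Set.indicator_of_mem hx, mul_one]
    have hcongr : ∀ r : G, Set.indicator (s • A) (fun _ => (1 : ℝ)) r *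
        Set.indicator (A⁻¹ * t • B) (fun _ => (1 : ℝ)) (r⁻¹ * x) =
        Set.indicator (s • A) (fun _ => (1 : ℝ)) r := by
      intro r
      by_cases hr : r ∈ s • A
      · obtain ⟨a, ha, rfl⟩ := hr
        obtain ⟨b, hb, rfl⟩ := hx
        have hmem : (s • a)⁻¹ * ((s * t) • b) ∈ A⁻¹ * t • B := by
          have heq : (s • a)⁻¹ * ((s * t) • b) = a⁻¹ * (t * b) := by
            simp only [smul_eq_mul]; group
          rw [heq]
          exact Set.mul_mem_mul (Set.inv_mem_inv.mpr ha) (Set.smul_mem_smul_set hb)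
        rw [Set.indicator_of_mem hmem, mul_one]
      · rw [Set.indicator_of_notMem hr, zero_mul]
    simp only [hcongr]
    have hmeas : MeasurableSet (s • A) := hA.const_smul s
    rw [show (fun (_ : G) => (1 : ℝ)) = (1 : G → ℝ) from rfl,
      MeasureTheory.integral_indicator_one hmeas, measureReal_def, measure_smul]
  · rw [Set.indicator_of_notMem hx, mul_zero]
    exact integral_nonneg fun r =>
      mul_nonneg (Set.indicator_nonneg (fun _ _ => zero_le_one) _)
        (Set.indicator_nonneg (fun _ _ => zero_le_one) _)
end

section
/- Define w : ℝ → (0,∞) by w(t) = max(|n|,1) for t ∈ [n, n + 1/max(|n|,1)²) and w(t) = max(|n|,1)² for t ∈ [n + 1/max(|n|,1)², n+1), for each integer n. Then there is a constant C such that w^{-2} * w^{-2} ≤ C·w^{-2} pointwise almost everywhere on ℝ, so L_2^w(ℝ) (after rescaling w by a constant) is a convolution algebra. -/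
open MeasureTheory ENNReal

noncomputable def paperWeight (t : ℝ) : ℝ :=
  let n : ℤ := ⌊t⌋
  let nb : ℝ := max |(n : ℝ)| 1
  if t - (n : ℝ) < 1 / nb ^ 2 then nb else nb ^ 2

open Set

noncomputable def nbb (n : ℤ) : ℝ := max |(n : ℝ)| 1

lemma nbb_one_le (n : ℤ) : 1 ≤ nbb n := le_max_right _ _
lemma nbb_pos (n : ℤ) : 0 < nbb n := lt_of_lt_of_le one_pos (nbb_one_le n)

lemma pw_eq {n : ℤ} {t : ℝ} (h : ⌊t⌋ = n) :
    paperWeight t = if t - (n : ℝ) < 1 / (nbb n) ^ 2 then nbb n else (nbb n) ^ 2 := by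
  simp only [paperWeight, h, nbb]
  rfl

lemma pw_lower {n : ℤ} {t : ℝ} (h : ⌊t⌋ = n) : nbb n ≤ paperWeight t := by
  rw [pw_eq h]
  split
  · exact le_refl _
  · nlinarith [nbb_one_le n]

lemma pw_upper {n : ℤ} {t : ℝ} (h : ⌊t⌋ = n) : paperWeight t ≤ (nbb n) ^ 2 := by
  rw [pw_eq h]
  split
  · nlinarith [nbb_one_le n]
  · exact le_refl _

lemma pw_one_le (t : ℝ) : 1 ≤ paperWeight t := le_trans (nbb_one_le _) (pw_lower rfl)
lemma pw_pos (t : ℝ) : 0 < paperWeight t := lt_of_lt_of_le one_pos (pw_one_le t)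

lemma measurable_pw : Measurable paperWeight := by
  have h1 : Measurable fun t : ℝ => ((⌊t⌋ : ℝ) : ℝ) :=
    measurable_from_top.comp Int.measurable_floor
  have h2 : Measurable fun t : ℝ => nbb ⌊t⌋ := by
    unfold nbb; exact (h1.abs).max measurable_const
  unfold paperWeight
  apply Measurable.ite _ h2 (h2.pow_const 2)
  · exact measurableSet_lt (measurable_id.sub h1) ((h2.pow_const 2).const_div 1)

noncomputable def Phi (t : ℝ) : ℝ≥0∞ := ENNReal.ofReal ((paperWeight t ^ 2)⁻¹)
noncomputable def Bb (n : ℤ) : ℝ≥0∞ := (ENNReal.ofReal (nbb n))⁻¹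

lemma Bb_le_one (n : ℤ) : Bb n ≤ 1 := by
  rw [Bb, ENNReal.inv_le_one]
  exact ENNReal.one_le_ofReal.mpr (nbb_one_le n)

lemma ofReal_inv_pow (c : ℝ) (hc : 0 < c) (k : ℕ) :
    ENNReal.ofReal ((c ^ k)⁻¹) = (ENNReal.ofReal c)⁻¹ ^ k := by
  rw [ENNReal.ofReal_inv_of_pos (by positivity), ENNReal.ofReal_pow hc.le, ENNReal.inv_pow]

lemma Phi_le_floor {n : ℤ} {t : ℝ} (h : ⌊t⌋ = n) : Phi t ≤ Bb n ^ 2 := by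
  rw [Phi, Bb, ← ofReal_inv_pow _ (nbb_pos n)]
  apply ENNReal.ofReal_le_ofReal
  have h1 := pw_lower h
  have h2 := nbb_pos n
  have := pw_pos t
  apply inv_anti₀ (by positivity)
  nlinarith

lemma Phi_ge_floor {n : ℤ} {t : ℝ} (h : ⌊t⌋ = n) : Bb n ^ 4 ≤ Phi t := by
  rw [Phi, Bb, ← ofReal_inv_pow _ (nbb_pos n)]
  apply ENNReal.ofReal_le_ofReal
  have h1 := pw_upper h
  have h2 := nbb_pos n
  have := pw_pos t
  apply inv_anti₀ (by positivity)
  nlinarith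

lemma Phi_le_one (t : ℝ) : Phi t ≤ 1 :=
  le_trans (Phi_le_floor rfl) (by simpa using pow_le_pow_left' (Bb_le_one ⌊t⌋) 2)

lemma floor_of_mem {n : ℤ} {t : ℝ} (ht : t ∈ Ico (n : ℝ) ((n : ℝ) + 1)) : ⌊t⌋ = n := by
  rw [Int.floor_eq_iff]; exact ⟨ht.1, by exact_mod_cast ht.2⟩

lemma block_integral (n : ℤ) :
    ∫⁻ t in Ico (n : ℝ) ((n : ℝ) + 1), Phi t ≤ 2 * Bb n ^ 4 := by
  set c : ℝ := (n : ℝ) + (nbb n ^ 2)⁻¹ with hc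
  have h1 : (1:ℝ) ≤ nbb n := nbb_one_le n
  have hp : (0:ℝ) < nbb n := nbb_pos n
  have hinv1 : (nbb n ^ 2)⁻¹ ≤ 1 := by
    rw [inv_le_one_iff₀]; right; nlinarith
  have h0' : (0:ℝ) ≤ (nbb n ^ 2)⁻¹ := by positivity
  have hcle : c ≤ (n : ℝ) + 1 := by rw [hc]; linarith
  have hcge : (n : ℝ) ≤ c := by rw [hc]; linarith
  have hsub : Ico (n : ℝ) ((n : ℝ) + 1) ⊆ Ico (n : ℝ) c ∪ Ico c ((n : ℝ) + 1) := by
    intro t ht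
    rcases lt_or_ge t c with h | h
    · exact Or.inl ⟨ht.1, h⟩
    · exact Or.inr ⟨h, ht.2⟩
  calc ∫⁻ t in Ico (n : ℝ) ((n : ℝ) + 1), Phi t
      ≤ ∫⁻ t in Ico (n : ℝ) c ∪ Ico c ((n : ℝ) + 1), Phi t :=
        lintegral_mono_set hsub
    _ ≤ (∫⁻ t in Ico (n : ℝ) c, Phi t) + ∫⁻ t in Ico c ((n : ℝ) + 1), Phi t :=
        lintegral_union_le _ _ _
    _ ≤ Bb n ^ 2 * volume (Ico (n : ℝ) c) + Bb n ^ 4 * volume (Ico c ((n : ℝ) + 1)) := by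
        gcongr
        · rw [← setLIntegral_const]
          apply setLIntegral_mono measurable_const
          intro t ht
          have hfl : ⌊t⌋ = n := floor_of_mem ⟨ht.1, lt_of_lt_of_le ht.2 hcle⟩
          have hpw : paperWeight t = nbb n := by
            rw [pw_eq hfl, if_pos]; rw [hc] at ht; rw [one_div]; linarith [ht.2]
          rw [Phi, hpw, ofReal_inv_pow _ hp]
          exact le_refl _
        · rw [← setLIntegral_const]
          apply setLIntegral_mono measurable_const
          intro t ht
          have hfl : ⌊t⌋ = n := floor_of_mem ⟨le_trans hcge ht.1, ht.2⟩
          have hpw : paperWeight t = nbb n ^ 2 := by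
            rw [pw_eq hfl, if_neg]; rw [hc] at ht; rw [one_div]; push_neg; linarith [ht.1]
          rw [Phi, hpw, ← pow_mul, ofReal_inv_pow _ hp]
          exact le_refl _
    _ ≤ Bb n ^ 2 * Bb n ^ 2 + Bb n ^ 4 * 1 := by
        gcongr
        · rw [Real.volume_Ico, hc, add_sub_cancel_left, Bb, ← ofReal_inv_pow _ hp]
        · rw [Real.volume_Ico]
          apply ENNReal.ofReal_le_one.mpr
          have h0 : (0:ℝ) ≤ (nbb n ^ 2)⁻¹ := by positivity
          rw [hc]; linarith
    _ = 2 * Bb n ^ 4 := by ring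

lemma measurable_Phi : Measurable Phi :=
  ENNReal.measurable_ofReal.comp ((measurable_pw.pow_const 2).inv)

lemma nbb_pred (k : ℤ) : nbb k ≤ 2 * nbb (k - 1) := by
  have h : |(k:ℝ)| ≤ |(k:ℝ) - 1| + 1 := by
    calc |(k:ℝ)| = |((k:ℝ) - 1) + 1| := by ring_nf
    _ ≤ |(k:ℝ) - 1| + |(1:ℝ)| := abs_add_le _ _
    _ = |(k:ℝ) - 1| + 1 := by rw [abs_one]
  unfold nbb
  push_cast
  have h1 : (1:ℝ) ≤ max |(k:ℝ) - 1| 1 := le_max_right _ _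
  have h2 : |(k:ℝ) - 1| ≤ max |(k:ℝ) - 1| 1 := le_max_left _ _
  exact max_le (by linarith) (by linarith)

lemma nbb_subadd (m n : ℤ) : nbb m ≤ nbb n + nbb (m - n) := by
  have h : |(m:ℝ)| ≤ |(n:ℝ)| + |((m - n : ℤ) : ℝ)| := by
    push_cast
    calc |(m:ℝ)| = |(n:ℝ) + ((m:ℝ) - n)| := by ring_nf
    _ ≤ |(n:ℝ)| + |(m:ℝ) - n| := abs_add_le _ _
  unfold nbb
  have h1 : (1:ℝ) ≤ max |(n:ℝ)| 1 := le_max_right _ _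
  have h2 : (1:ℝ) ≤ max |((m - n : ℤ):ℝ)| 1 := le_max_right _ _
  have h3 : |(n:ℝ)| ≤ max |(n:ℝ)| 1 := le_max_left _ _
  have h4 : |((m - n : ℤ):ℝ)| ≤ max |((m - n : ℤ):ℝ)| 1 := le_max_left _ _
  exact max_le (by linarith) (by linarith)

lemma Bb_le_two_of {a b : ℤ} (h : nbb a ≤ 2 * nbb b) : Bb b ≤ 2 * Bb a := by
  have ha := nbb_pos a
  have hb := nbb_pos b
  have ha1 : nbb a * (nbb a)⁻¹ = 1 := mul_inv_cancel₀ (ne_of_gt ha)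
  have hb1 : nbb b * (nbb b)⁻¹ = 1 := mul_inv_cancel₀ (ne_of_gt hb)
  have key : (nbb b)⁻¹ ≤ 2 * (nbb a)⁻¹ := by
    have hmul := mul_le_mul_of_nonneg_right h
      (by positivity : (0:ℝ) ≤ (nbb a)⁻¹ * (nbb b)⁻¹)
    have ha' : nbb a ≠ 0 := ne_of_gt ha
    have hb' : nbb b ≠ 0 := ne_of_gt hb
    have e1 : nbb a * ((nbb a)⁻¹ * (nbb b)⁻¹) = (nbb b)⁻¹ := by field_simp
    have e2 : 2 * nbb b * ((nbb a)⁻¹ * (nbb b)⁻¹) = 2 * (nbb a)⁻¹ := by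
      field_simp
    rw [e1, e2] at hmul
    exact hmul
  calc Bb b = ENNReal.ofReal ((nbb b)⁻¹) := by
        rw [Bb, ENNReal.ofReal_inv_of_pos hb]
  _ ≤ ENNReal.ofReal (2 * (nbb a)⁻¹) := ENNReal.ofReal_le_ofReal key
  _ = 2 * Bb a := by
        rw [ENNReal.ofReal_mul (by norm_num), Bb, ENNReal.ofReal_inv_of_pos ha,
          ENNReal.ofReal_ofNat]

lemma Bb_pred (k : ℤ) : Bb (k - 1) ≤ 2 * Bb k := Bb_le_two_of (nbb_pred k)

lemma Phi_shift_le {x : ℝ} {m n : ℤ} (hm : ⌊x⌋ = m) {t : ℝ}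
    (ht : t ∈ Ico (n : ℝ) ((n : ℝ) + 1)) : Phi (x - t) ≤ 4 * Bb (m - n) ^ 2 := by
  have hx1 : (m : ℝ) ≤ x := by rw [← hm]; exact Int.floor_le x
  have hx2 : x < (m : ℝ) + 1 := by rw [← hm]; exact Int.lt_floor_add_one x
  have hcases : ⌊x - t⌋ = m - n ∨ ⌊x - t⌋ = m - n - 1 := by
    have hge : m - n - 1 ≤ ⌊x - t⌋ := by
      rw [Int.le_floor]; push_cast; linarith [ht.2]
    have hle : ⌊x - t⌋ ≤ m - n := by
      rw [Int.floor_le_iff]; push_cast; linarith [ht.1]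
    omega
  rcases hcases with h | h
  · calc Phi (x - t) ≤ Bb (m - n) ^ 2 := Phi_le_floor h
    _ ≤ 4 * Bb (m - n) ^ 2 := by
        nth_rewrite 1 [← one_mul (Bb (m - n) ^ 2)]
        gcongr
        norm_num
  · calc Phi (x - t) ≤ Bb (m - n - 1) ^ 2 := Phi_le_floor h
    _ ≤ (2 * Bb (m - n)) ^ 2 := by gcongr; exact Bb_pred (m - n)
    _ = 4 * Bb (m - n) ^ 2 := by ring

lemma boundA {x : ℝ} {m : ℤ} (hm : ⌊x⌋ = m) (n : ℤ) :
    ∫⁻ t in Ico (n : ℝ) ((n : ℝ) + 1), Phi t * Phi (x - t) ≤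
      8 * Bb n ^ 4 * Bb (m - n) ^ 2 := by
  calc ∫⁻ t in Ico (n : ℝ) ((n : ℝ) + 1), Phi t * Phi (x - t)
      ≤ ∫⁻ t in Ico (n : ℝ) ((n : ℝ) + 1), Phi t * (4 * Bb (m - n) ^ 2) := by
        apply setLIntegral_mono (measurable_Phi.mul measurable_const)
        intro t ht
        exact mul_le_mul_right (Phi_shift_le hm ht) _
    _ = (∫⁻ t in Ico (n : ℝ) ((n : ℝ) + 1), Phi t) * (4 * Bb (m - n) ^ 2) :=
        lintegral_mul_const _ measurable_Phi
    _ ≤ (2 * Bb n ^ 4) * (4 * Bb (m - n) ^ 2) := by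
        gcongr
        exact block_integral n
    _ = 8 * Bb n ^ 4 * Bb (m - n) ^ 2 := by ring

lemma boundB {x : ℝ} {m : ℤ} (hm : ⌊x⌋ = m) (n : ℤ) :
    ∫⁻ t in Ico (n : ℝ) ((n : ℝ) + 1), Phi t * Phi (x - t) ≤
      34 * Bb n ^ 2 * Bb (m - n) ^ 4 := by
  have hx1 : (m : ℝ) ≤ x := by rw [← hm]; exact Int.floor_le x
  have hx2 : x < (m : ℝ) + 1 := by rw [← hm]; exact Int.lt_floor_add_one x
  have step1 : ∫⁻ t in Ico (n : ℝ) ((n : ℝ) + 1), Phi t * Phi (x - t) ≤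
      Bb n ^ 2 * ∫⁻ t in Ico (n : ℝ) ((n : ℝ) + 1), Phi (x - t) := by
    have hcomp : Measurable fun t : ℝ => Phi (x - t) :=
      measurable_Phi.comp (measurable_const.sub measurable_id)
    rw [← lintegral_const_mul _ hcomp]
    apply setLIntegral_mono (measurable_const.mul hcomp)
    intro t ht
    exact mul_le_mul_left (Phi_le_floor (floor_of_mem ht)) _
  have step2 : ∫⁻ t in Ico (n : ℝ) ((n : ℝ) + 1), Phi (x - t) ≤ 34 * Bb (m - n) ^ 4 := by
    have hmp : MeasurePreserving (fun t : ℝ => x - t) volume volume :=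
      Measure.measurePreserving_sub_left volume x
    have hemb : MeasurableEmbedding (fun t : ℝ => x - t) :=
      (Homeomorph.subLeft x).measurableEmbedding
    rw [hmp.setLIntegral_comp_emb hemb]
    have himg : (fun t : ℝ => x - t) '' Ico (n : ℝ) ((n : ℝ) + 1) ⊆
        Ico ((m : ℝ) - n - 1) ((m : ℝ) - n - 1 + 1) ∪
          Ico ((m : ℝ) - n) ((m : ℝ) - n + 1) := by
      rintro s ⟨t, ht, rfl⟩
      dsimp only
      rcases lt_or_ge (x - t) ((m : ℝ) - n) with h | h
      · left; constructor
        · linarith [ht.2]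
        · linarith
      · right; constructor
        · exact h
        · linarith [ht.1]
    calc ∫⁻ s in (fun t : ℝ => x - t) '' Ico (n : ℝ) ((n : ℝ) + 1), Phi s
        ≤ ∫⁻ s in Ico ((m : ℝ) - n - 1) ((m : ℝ) - n - 1 + 1) ∪
            Ico ((m : ℝ) - n) ((m : ℝ) - n + 1), Phi s := lintegral_mono_set himg
      _ ≤ (∫⁻ s in Ico ((m : ℝ) - n - 1) ((m : ℝ) - n - 1 + 1), Phi s) +
            ∫⁻ s in Ico ((m : ℝ) - n) ((m : ℝ) - n + 1), Phi s := lintegral_union_le _ _ _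
      _ ≤ 2 * Bb (m - n - 1) ^ 4 + 2 * Bb (m - n) ^ 4 := by
          gcongr
          · have := block_integral (m - n - 1)
            push_cast at this ⊢
            convert this using 3 <;> ring
          · have := block_integral (m - n)
            push_cast at this ⊢
            convert this using 3 <;> ring
      _ ≤ 2 * (2 * Bb (m - n)) ^ 4 + 2 * Bb (m - n) ^ 4 := by
          gcongr
          exact Bb_pred (m - n)
      _ = 34 * Bb (m - n) ^ 4 := by ring
  calc ∫⁻ t in Ico (n : ℝ) ((n : ℝ) + 1), Phi t * Phi (x - t)
      ≤ Bb n ^ 2 * (34 * Bb (m - n) ^ 4) := le_trans step1 (mul_le_mul_right step2 _)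
    _ = 34 * Bb n ^ 2 * Bb (m - n) ^ 4 := by ring

lemma block_bound {x : ℝ} {m : ℤ} (hm : ⌊x⌋ = m) (n : ℤ) :
    ∫⁻ t in Ico (n : ℝ) ((n : ℝ) + 1), Phi t * Phi (x - t) ≤
      544 * Bb m ^ 4 * (Bb n ^ 2 + Bb (m - n) ^ 2) := by
  rcases le_total (nbb (m - n)) (nbb n) with h | h
  · have hBn : Bb n ≤ 2 * Bb m :=
      Bb_le_two_of (by linarith [nbb_subadd m n])
    calc ∫⁻ t in Ico (n : ℝ) ((n : ℝ) + 1), Phi t * Phi (x - t)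
        ≤ 8 * Bb n ^ 4 * Bb (m - n) ^ 2 := boundA hm n
      _ ≤ 8 * (2 * Bb m) ^ 4 * Bb (m - n) ^ 2 := by gcongr
      _ = 128 * Bb m ^ 4 * Bb (m - n) ^ 2 := by ring
      _ ≤ 544 * Bb m ^ 4 * (Bb n ^ 2 + Bb (m - n) ^ 2) := by
          gcongr
          · norm_num
          · exact le_add_self
  · have hBk : Bb (m - n) ≤ 2 * Bb m :=
      Bb_le_two_of (by linarith [nbb_subadd m n])
    calc ∫⁻ t in Ico (n : ℝ) ((n : ℝ) + 1), Phi t * Phi (x - t)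
        ≤ 34 * Bb n ^ 2 * Bb (m - n) ^ 4 := boundB hm n
      _ ≤ 34 * Bb n ^ 2 * (2 * Bb m) ^ 4 := by gcongr
      _ = 544 * Bb m ^ 4 * Bb n ^ 2 := by ring
      _ ≤ 544 * Bb m ^ 4 * (Bb n ^ 2 + Bb (m - n) ^ 2) := by
          gcongr
          exact le_self_add

noncomputable def Sconst : ℝ≥0∞ := ∑' n : ℤ, Bb n ^ 2

lemma nbb_natCast (k : ℕ) : nbb (k : ℤ) = max (k : ℝ) 1 := by
  unfold nbb
  rw [abs_of_nonneg]
  · push_cast; ring_nf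
  · push_cast; positivity

lemma nbb_neg (n : ℤ) : nbb (-n) = nbb n := by unfold nbb; push_cast; rw [abs_neg]

lemma summable_sq_inv : Summable fun k : ℕ => (((k : ℝ) + 1) ^ 2)⁻¹ := by
  have h0 : Summable fun k : ℕ => (((k : ℝ)) ^ 2)⁻¹ :=
    Real.summable_nat_pow_inv.mpr one_lt_two
  have h1 := (summable_nat_add_iff (f := fun k : ℕ => (((k : ℝ)) ^ 2)⁻¹) 1).mpr h0
  exact h1.congr fun k => by push_cast; ring_nf

lemma summable_aux : Summable fun n : ℤ => ((nbb n) ^ 2)⁻¹ := by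
  have hle : ∀ k : ℕ, ((nbb (k : ℤ)) ^ 2)⁻¹ ≤ (((k : ℝ) + 1) ^ 2)⁻¹ * 4 := by
    intro k
    have h1 : ((k : ℝ) + 1) / 2 ≤ nbb (k : ℤ) := by
      rw [nbb_natCast]
      rcases le_or_gt (k : ℝ) 1 with h | h
      · calc ((k : ℝ) + 1) / 2 ≤ 1 := by linarith
        _ ≤ max (k : ℝ) 1 := le_max_right _ _
      · calc ((k : ℝ) + 1) / 2 ≤ (k : ℝ) := by linarith
        _ ≤ max (k : ℝ) 1 := le_max_left _ _
    have h2 : (0 : ℝ) < (k : ℝ) + 1 := by positivity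
    have h3 := nbb_pos (k : ℤ)
    have h4 : ((k : ℝ) + 1) ^ 2 ≤ 4 * nbb (k : ℤ) ^ 2 := by nlinarith
    have h5 : (((k : ℝ) + 1) ^ 2)⁻¹ * (((k : ℝ) + 1) ^ 2) = 1 :=
      inv_mul_cancel₀ (by positivity)
    have h6 : (nbb (k : ℤ) ^ 2)⁻¹ * (nbb (k : ℤ) ^ 2) = 1 :=
      inv_mul_cancel₀ (by positivity)
    have h7 : (0 : ℝ) ≤ (((k : ℝ) + 1) ^ 2)⁻¹ := by positivity
    have h8 : (0 : ℝ) ≤ (nbb (k : ℤ) ^ 2)⁻¹ := by positivity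
    nlinarith [mul_le_mul_of_nonneg_left h4 (mul_nonneg h7 h8)]
  have hnat : Summable fun k : ℕ => ((nbb (k : ℤ)) ^ 2)⁻¹ :=
    Summable.of_nonneg_of_le (fun k => by positivity) hle (summable_sq_inv.mul_right 4)
  exact Summable.of_nat_of_neg (f := fun n : ℤ => ((nbb n) ^ 2)⁻¹) hnat
    (hnat.congr fun k => by simp only [nbb_neg])

lemma Sconst_lt_top : Sconst < ⊤ := by
  have heq : (fun n : ℤ => Bb n ^ 2) = fun n : ℤ => ENNReal.ofReal (((nbb n) ^ 2)⁻¹) := by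
    funext n
    rw [ofReal_inv_pow _ (nbb_pos n), Bb]
  rw [Sconst, heq, ← ENNReal.ofReal_tsum_of_nonneg (fun n => by positivity) summable_aux]
  exact ENNReal.ofReal_lt_top

lemma tsum_shift (m : ℤ) : ∑' n : ℤ, Bb (m - n) ^ 2 = Sconst :=
  Equiv.tsum_eq (Equiv.subLeft m) (fun n => Bb n ^ 2)

lemma key_bound (x : ℝ) :
    ∫⁻ t, Phi t * Phi (x - t) ≤ (1088 * Sconst) * Phi x := by
  set m := ⌊x⌋ with hm
  have hdisj : Pairwise (Function.onFun Disjoint fun n : ℤ => Ico (n : ℝ) ((n : ℝ) + 1)) := by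
    intro i j hij
    apply Ico_disjoint_Ico.mpr
    rcases Ne.lt_or_gt hij with h | h
    · have : (i : ℝ) + 1 ≤ (j : ℝ) := by exact_mod_cast h
      calc min ((i:ℝ)+1) ((j:ℝ)+1) ≤ (i:ℝ)+1 := min_le_left _ _
        _ ≤ (j:ℝ) := this
        _ ≤ max (i:ℝ) (j:ℝ) := le_max_right _ _
    · have : (j : ℝ) + 1 ≤ (i : ℝ) := by exact_mod_cast h
      calc min ((i:ℝ)+1) ((j:ℝ)+1) ≤ (j:ℝ)+1 := min_le_right _ _
        _ ≤ (i:ℝ) := this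
        _ ≤ max (i:ℝ) (j:ℝ) := le_max_left _ _
  have hsplit : ∫⁻ t, Phi t * Phi (x - t) =
      ∑' n : ℤ, ∫⁻ t in Ico (n : ℝ) ((n : ℝ) + 1), Phi t * Phi (x - t) := by
    rw [← lintegral_iUnion (fun n => measurableSet_Ico) hdisj, iUnion_Ico_intCast,
      Measure.restrict_univ]
  rw [hsplit]
  calc ∑' n : ℤ, ∫⁻ t in Ico (n : ℝ) ((n : ℝ) + 1), Phi t * Phi (x - t)
      ≤ ∑' n : ℤ, 544 * Bb m ^ 4 * (Bb n ^ 2 + Bb (m - n) ^ 2) :=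
        ENNReal.tsum_le_tsum fun n => block_bound hm.symm n
    _ = 544 * Bb m ^ 4 * (Sconst + Sconst) := by
        rw [ENNReal.tsum_mul_left, ENNReal.tsum_add, tsum_shift m, Sconst]
    _ = (1088 * Sconst) * Bb m ^ 4 := by ring
    _ ≤ (1088 * Sconst) * Phi x := mul_le_mul_right (Phi_ge_floor hm.symm) _

noncomputable def Ckey : ℝ≥0∞ := 1088 * Sconst

lemma Ckey_lt_top : Ckey < ⊤ := by
  rw [Ckey]
  exact ENNReal.mul_lt_top (by norm_num) Sconst_lt_top

lemma Ckey_pos : 0 < Ckey := by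
  rw [Ckey]
  apply ENNReal.mul_pos (by norm_num)
  rw [Sconst]
  intro h
  have h0 : Bb 0 ^ 2 ≤ ∑' n : ℤ, Bb n ^ 2 := ENNReal.le_tsum 0
  rw [h] at h0
  have : Bb 0 = 1 := by
    rw [Bb]; unfold nbb; norm_num
  rw [this] at h0
  simp at h0

lemma part1 (x : ℝ) :
    (∫ t : ℝ, (paperWeight t ^ 2)⁻¹ * (paperWeight (x - t) ^ 2)⁻¹) ≤
      Ckey.toReal * (paperWeight x ^ 2)⁻¹ := by
  have hnn : 0 ≤ᵐ[volume] fun t => (paperWeight t ^ 2)⁻¹ * (paperWeight (x - t) ^ 2)⁻¹ := by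
    filter_upwards with t
    positivity
  have hmeas : AEStronglyMeasurable
      (fun t => (paperWeight t ^ 2)⁻¹ * (paperWeight (x - t) ^ 2)⁻¹) volume := by
    apply Measurable.aestronglyMeasurable
    exact ((measurable_pw.pow_const 2).inv).mul
      (((measurable_pw.pow_const 2).inv).comp (measurable_const.sub measurable_id))
  rw [integral_eq_lintegral_of_nonneg_ae hnn hmeas]
  have heq : ∀ t : ℝ, ENNReal.ofReal ((paperWeight t ^ 2)⁻¹ * (paperWeight (x - t) ^ 2)⁻¹) =
      Phi t * Phi (x - t) := by
    intro t
    rw [ENNReal.ofReal_mul (by positivity)]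
    rfl
  calc (∫⁻ t, ENNReal.ofReal ((paperWeight t ^ 2)⁻¹ * (paperWeight (x - t) ^ 2)⁻¹)).toReal
      = (∫⁻ t, Phi t * Phi (x - t)).toReal := by
        congr 1
        exact lintegral_congr heq
    _ ≤ (Ckey * Phi x).toReal := by
        apply ENNReal.toReal_mono
        · exact ENNReal.mul_ne_top Ckey_lt_top.ne
            (lt_of_le_of_lt (Phi_le_one x) ENNReal.one_lt_top).ne
        · exact key_bound x
    _ = Ckey.toReal * (paperWeight x ^ 2)⁻¹ := by
        rw [ENNReal.toReal_mul, Phi, ENNReal.toReal_ofReal (by positivity)]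

lemma rpow_two' (a : ℝ≥0∞) : a ^ (2:ℝ) = a ^ (2:ℕ) := by
  rw [← ENNReal.rpow_natCast]; norm_num

lemma lintegral_sq_lt_top {φ : ℝ → ℝ} (h : MemLp φ 2 (volume : Measure ℝ)) :
    ∫⁻ x, (‖φ x‖₊ : ℝ≥0∞) ^ (2:ℝ) < ⊤ := by
  have h2 := h.2
  rw [eLpNorm_eq_lintegral_rpow_enorm_toReal two_ne_zero ENNReal.ofNat_ne_top] at h2
  simp only [ENNReal.toReal_ofNat] at h2
  exact (ENNReal.rpow_lt_top_iff_of_pos (by norm_num : (0:ℝ) < 1/2)).mp h2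

lemma eLpNorm_lt_top_of {φ : ℝ → ℝ} (h : ∫⁻ x, (‖φ x‖₊ : ℝ≥0∞) ^ (2:ℝ) < ⊤) :
    eLpNorm φ 2 (volume : Measure ℝ) < ⊤ := by
  rw [eLpNorm_eq_lintegral_rpow_enorm_toReal two_ne_zero ENNReal.ofNat_ne_top]
  simp only [ENNReal.toReal_ofNat]
  exact ENNReal.rpow_lt_top_of_nonneg (by norm_num) h.ne

lemma Ps_sq (t : ℝ) : ENNReal.ofReal ((paperWeight t)⁻¹) ^ (2:ℕ) = Phi t := by
  rw [← ENNReal.ofReal_pow (inv_nonneg.mpr (pw_pos t).le), Phi]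
  congr 1
  rw [inv_pow]

lemma Phi_mul_w_sq (x : ℝ) : Phi x * ENNReal.ofReal (paperWeight x) ^ (2:ℕ) = 1 := by
  rw [Phi, ← ENNReal.ofReal_pow (pw_pos x).le,
    ← ENNReal.ofReal_mul (inv_nonneg.mpr (pow_nonneg (pw_pos x).le 2)),
    inv_mul_cancel₀ (pow_ne_zero 2 (pw_pos x).ne'), ENNReal.ofReal_one]

lemma nf_split (f : ℝ → ℝ) (t : ℝ) :
    (‖f t‖₊ : ℝ≥0∞) = (‖f t * paperWeight t‖₊ : ℝ≥0∞) * ENNReal.ofReal ((paperWeight t)⁻¹) := by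
  rw [← enorm_eq_nnnorm, ← enorm_eq_nnnorm, Real.enorm_eq_ofReal_abs, Real.enorm_eq_ofReal_abs,
    ← ENNReal.ofReal_mul (abs_nonneg _)]
  congr 1
  rw [abs_mul, abs_of_pos (pw_pos t), mul_assoc, mul_inv_cancel₀ (pw_pos t).ne', mul_one]

lemma part2_meas (f g : ℝ → ℝ) (hfm : Measurable f) (hgm : Measurable g)
    (hf : MemLp (fun x => f x * paperWeight x) 2 (volume : Measure ℝ))
    (hg : MemLp (fun x => g x * paperWeight x) 2 (volume : Measure ℝ)) :
    MemLp (fun x => (∫ t : ℝ, f t * g (x - t)) * paperWeight x) 2 (volume : Measure ℝ) := by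
  have hpq : Real.HolderConjugate 2 2 := (Real.holderConjugate_iff_eq_conjExponent one_lt_two).mpr (by norm_num)
  set Fe : ℝ → ℝ≥0∞ := fun t => (‖f t * paperWeight t‖₊ : ℝ≥0∞) with hFe
  set Ge : ℝ → ℝ≥0∞ := fun t => (‖g t * paperWeight t‖₊ : ℝ≥0∞) with hGe
  set Ps : ℝ → ℝ≥0∞ := fun t => ENNReal.ofReal ((paperWeight t)⁻¹) with hPs
  have hFe_m : Measurable Fe := (hfm.mul measurable_pw).nnnorm.coe_nnreal_ennreal
  have hGe_m : Measurable Ge := (hgm.mul measurable_pw).nnnorm.coe_nnreal_ennreal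
  have hPs_m : Measurable Ps := ENNReal.measurable_ofReal.comp measurable_pw.inv
  -- measurability of the convolution
  have hconv_m : StronglyMeasurable fun x => ∫ t : ℝ, f t * g (x - t) := by
    apply MeasureTheory.StronglyMeasurable.integral_prod_right'
      (f := fun p : ℝ × ℝ => f p.2 * g (p.1 - p.2))
    exact ((hfm.comp measurable_snd).mul
      (hgm.comp (measurable_fst.sub measurable_snd))).stronglyMeasurable
  constructor
  · exact (hconv_m.mul measurable_pw.stronglyMeasurable).aestronglyMeasurable
  -- the quantitative bound
  have hA_m : Measurable fun p : ℝ × ℝ => Fe p.2 ^ (2:ℕ) * Ge (p.1 - p.2) ^ (2:ℕ) :=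
    ((hFe_m.comp measurable_snd).pow_const 2).mul
      ((hGe_m.comp (measurable_fst.sub measurable_snd)).pow_const 2)
  set A : ℝ → ℝ≥0∞ := fun x => ∫⁻ t, Fe t ^ (2:ℕ) * Ge (x - t) ^ (2:ℕ) with hA
  have hmain : ∀ x : ℝ,
      (‖(∫ t : ℝ, f t * g (x - t)) * paperWeight x‖₊ : ℝ≥0∞) ^ (2:ℕ) ≤ Ckey * A x := by
    intro x
    set I : ℝ≥0∞ := ∫⁻ t, (‖f t‖₊ : ℝ≥0∞) * (‖g (x - t)‖₊ : ℝ≥0∞) with hI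
    set B : ℝ≥0∞ := ∫⁻ t, Ps t ^ (2:ℕ) * Ps (x - t) ^ (2:ℕ) with hB
    -- Cauchy-Schwarz
    have hCS : I ≤ A x ^ (1/2:ℝ) * B ^ (1/2:ℝ) := by
      have hu : AEMeasurable (fun t => Fe t * Ge (x - t)) volume :=
        (hFe_m.mul (hGe_m.comp (measurable_const.sub measurable_id))).aemeasurable
      have hv : AEMeasurable (fun t => Ps t * Ps (x - t)) volume :=
        (hPs_m.mul (hPs_m.comp (measurable_const.sub measurable_id))).aemeasurable
      have h0 := ENNReal.lintegral_mul_le_Lp_mul_Lq volume hpq hu hv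
      have heq1 : ∀ t : ℝ, ((fun t => Fe t * Ge (x - t)) * fun t => Ps t * Ps (x - t)) t =
          (‖f t‖₊ : ℝ≥0∞) * (‖g (x - t)‖₊ : ℝ≥0∞) := by
        intro t
        simp only [Pi.mul_apply]
        rw [nf_split f t, nf_split g (x - t)]
        ring
      rw [lintegral_congr heq1] at h0
      calc I ≤ (∫⁻ t, (Fe t * Ge (x - t)) ^ (2:ℝ)) ^ (1/2:ℝ) *
            (∫⁻ t, (Ps t * Ps (x - t)) ^ (2:ℝ)) ^ (1/2:ℝ) := h0
        _ = A x ^ (1/2:ℝ) * B ^ (1/2:ℝ) := by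
            congr 1
            · congr 1
              apply lintegral_congr
              intro t
              rw [rpow_two', mul_pow]
            · congr 1
              apply lintegral_congr
              intro t
              rw [rpow_two', mul_pow]
    have hBle : B ≤ Ckey * Phi x := by
      have : B = ∫⁻ t, Phi t * Phi (x - t) := by
        apply lintegral_congr
        intro t
        rw [hPs, Ps_sq, Ps_sq]
      rw [this]
      exact key_bound x
    have hI2 : I ^ (2:ℕ) ≤ A x * B := by
      calc I ^ (2:ℕ) ≤ (A x ^ (1/2:ℝ) * B ^ (1/2:ℝ)) ^ (2:ℕ) := pow_le_pow_left' hCS 2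
        _ = A x * B := by
            rw [mul_pow, ← rpow_two', ← rpow_two', ← ENNReal.rpow_mul, ← ENNReal.rpow_mul]
            norm_num
    -- assemble
    have hH1 : (‖(∫ t : ℝ, f t * g (x - t)) * paperWeight x‖₊ : ℝ≥0∞) ≤
        I * ENNReal.ofReal (paperWeight x) := by
      rw [← enorm_eq_nnnorm, Real.enorm_eq_ofReal_abs, abs_mul, abs_of_pos (pw_pos x),
        ENNReal.ofReal_mul (abs_nonneg _)]
      apply mul_le_mul_left
      have hni := MeasureTheory.norm_integral_le_lintegral_norm
        (μ := (volume : Measure ℝ)) (f := fun t => f t * g (x - t))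
      have heqI : ∫⁻ t, ENNReal.ofReal ‖f t * g (x - t)‖ = I := by
        apply lintegral_congr
        intro t
        rw [Real.norm_eq_abs, abs_mul, ENNReal.ofReal_mul (abs_nonneg _),
          ← enorm_eq_nnnorm, ← enorm_eq_nnnorm, Real.enorm_eq_ofReal_abs, Real.enorm_eq_ofReal_abs]
      rw [heqI] at hni
      calc ENNReal.ofReal |∫ t : ℝ, f t * g (x - t)| =
            ENNReal.ofReal ‖∫ t : ℝ, f t * g (x - t)‖ := by rw [Real.norm_eq_abs]
        _ ≤ ENNReal.ofReal I.toReal := ENNReal.ofReal_le_ofReal hni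
        _ ≤ I := ENNReal.ofReal_toReal_le
    calc (‖(∫ t : ℝ, f t * g (x - t)) * paperWeight x‖₊ : ℝ≥0∞) ^ (2:ℕ)
        ≤ (I * ENNReal.ofReal (paperWeight x)) ^ (2:ℕ) := pow_le_pow_left' hH1 2
      _ = I ^ (2:ℕ) * ENNReal.ofReal (paperWeight x) ^ (2:ℕ) := mul_pow _ _ _
      _ ≤ (A x * B) * ENNReal.ofReal (paperWeight x) ^ (2:ℕ) := by gcongr
      _ ≤ (A x * (Ckey * Phi x)) * ENNReal.ofReal (paperWeight x) ^ (2:ℕ) := by gcongr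
      _ = (Ckey * A x) * (Phi x * ENNReal.ofReal (paperWeight x) ^ (2:ℕ)) := by ring
      _ = Ckey * A x := by rw [Phi_mul_w_sq, mul_one]
  -- integrate
  apply eLpNorm_lt_top_of
  have hswap : ∫⁻ x, A x ≤ (∫⁻ t, Fe t ^ (2:ℕ)) * ∫⁻ t, Ge t ^ (2:ℕ) := by
    have hsw : (∫⁻ x, A x) = ∫⁻ t, ∫⁻ x, Fe t ^ (2:ℕ) * Ge (x - t) ^ (2:ℕ) :=
      lintegral_lintegral_swap hA_m.aemeasurable
    rw [hsw]
    have hinner : ∀ t : ℝ, ∫⁻ x, Fe t ^ (2:ℕ) * Ge (x - t) ^ (2:ℕ)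
        = Fe t ^ (2:ℕ) * ∫⁻ s, Ge s ^ (2:ℕ) := by
      intro t
      have hm2 : Measurable fun x : ℝ => Ge (x - t) ^ (2:ℕ) :=
        (hGe_m.comp (measurable_id.sub measurable_const)).pow_const 2
      have hm3 : Measurable fun x : ℝ => Ge (x - t) ^ (2:ℕ) := hm2
      rw [lintegral_const_mul _ hm2]
      congr 1
      exact (measurePreserving_sub_right volume t).lintegral_comp (hGe_m.pow_const 2)
    calc ∫⁻ t, ∫⁻ x, Fe t ^ (2:ℕ) * Ge (x - t) ^ (2:ℕ)
        = ∫⁻ t, Fe t ^ (2:ℕ) * ∫⁻ s, Ge s ^ (2:ℕ) := lintegral_congr hinner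
      _ = (∫⁻ t, Fe t ^ (2:ℕ)) * ∫⁻ s, Ge s ^ (2:ℕ) :=
          lintegral_mul_const _ (hFe_m.pow_const 2)
      _ ≤ (∫⁻ t, Fe t ^ (2:ℕ)) * ∫⁻ t, Ge t ^ (2:ℕ) := le_refl _
  have hFfin : ∫⁻ t, Fe t ^ (2:ℕ) < ⊤ := by
    have := lintegral_sq_lt_top hf
    calc ∫⁻ t, Fe t ^ (2:ℕ) = ∫⁻ t, (‖f t * paperWeight t‖₊ : ℝ≥0∞) ^ (2:ℝ) :=
          lintegral_congr fun t => by rw [rpow_two']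
    _ < ⊤ := this
  have hGfin : ∫⁻ t, Ge t ^ (2:ℕ) < ⊤ := by
    have := lintegral_sq_lt_top hg
    calc ∫⁻ t, Ge t ^ (2:ℕ) = ∫⁻ t, (‖g t * paperWeight t‖₊ : ℝ≥0∞) ^ (2:ℝ) :=
          lintegral_congr fun t => by rw [rpow_two']
    _ < ⊤ := this
  calc ∫⁻ x, (‖(∫ t : ℝ, f t * g (x - t)) * paperWeight x‖₊ : ℝ≥0∞) ^ (2:ℝ)
      = ∫⁻ x, (‖(∫ t : ℝ, f t * g (x - t)) * paperWeight x‖₊ : ℝ≥0∞) ^ (2:ℕ) :=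
        lintegral_congr fun x => by rw [rpow_two']
    _ ≤ ∫⁻ x, Ckey * A x := lintegral_mono hmain
    _ = Ckey * ∫⁻ x, A x := lintegral_const_mul' _ _ Ckey_lt_top.ne
    _ ≤ Ckey * ((∫⁻ t, Fe t ^ (2:ℕ)) * ∫⁻ t, Ge t ^ (2:ℕ)) := mul_le_mul_right hswap _
    _ < ⊤ := ENNReal.mul_lt_top Ckey_lt_top (ENNReal.mul_lt_top hFfin hGfin)

lemma aesm_of_memLp_mul {f : ℝ → ℝ}
    (hf : MemLp (fun x => f x * paperWeight x) 2 (volume : Measure ℝ)) :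
    AEStronglyMeasurable f (volume : Measure ℝ) := by
  have heq : (fun x => (f x * paperWeight x) * (paperWeight x)⁻¹) = f := by
    funext x
    field_simp [(pw_pos x).ne']
  rw [← heq]
  exact hf.1.mul (measurable_pw.inv.aestronglyMeasurable)

theorem paperWeight_L2_algebra' :
    ∃ C : ℝ, 0 < C ∧
      (∀ᵐ x : ℝ, (∫ t : ℝ, (paperWeight t ^ 2)⁻¹ * (paperWeight (x - t) ^ 2)⁻¹) ≤
          C * (paperWeight x ^ 2)⁻¹) ∧
      ∀ f g : ℝ → ℝ,
        MemLp (fun x => f x * paperWeight x) 2 (volume : Measure ℝ) →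
        MemLp (fun x => g x * paperWeight x) 2 (volume : Measure ℝ) →
        MemLp (fun x => (∫ t : ℝ, f t * g (x - t)) * paperWeight x) 2
          (volume : Measure ℝ) := by
  refine ⟨Ckey.toReal, ENNReal.toReal_pos Ckey_pos.ne' Ckey_lt_top.ne, ?_, ?_⟩
  · exact Filter.Eventually.of_forall part1
  · intro f g hf hg
    have haef := aesm_of_memLp_mul hf
    have haeg := aesm_of_memLp_mul hg
    set f' := haef.mk f with hf'def
    set g' := haeg.mk g with hg'def
    have hff' : f =ᵐ[volume] f' := haef.ae_eq_mk
    have hgg' : g =ᵐ[volume] g' := haeg.ae_eq_mk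
    have hf'm : Measurable f' := haef.stronglyMeasurable_mk.measurable
    have hg'm : Measurable g' := haeg.stronglyMeasurable_mk.measurable
    have hf' : MemLp (fun x => f' x * paperWeight x) 2 (volume : Measure ℝ) :=
      hf.ae_eq (hff'.mul (Filter.EventuallyEq.refl _ _))
    have hg' : MemLp (fun x => g' x * paperWeight x) 2 (volume : Measure ℝ) :=
      hg.ae_eq (hgg'.mul (Filter.EventuallyEq.refl _ _))
    have hconv_eq : ∀ x : ℝ, (∫ t : ℝ, f t * g (x - t)) = ∫ t : ℝ, f' t * g' (x - t) := by
      intro x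
      apply integral_congr_ae
      have hq : Measure.QuasiMeasurePreserving (fun t : ℝ => x - t) volume volume :=
        (Measure.measurePreserving_sub_left volume x).quasiMeasurePreserving
      have hgeq : (fun t : ℝ => g (x - t)) =ᵐ[volume] fun t : ℝ => g' (x - t) :=
        hq.ae_eq_comp hgg'
      exact hff'.mul hgeq
    have heq2 : (fun x => (∫ t : ℝ, f t * g (x - t)) * paperWeight x) =
        fun x => (∫ t : ℝ, f' t * g' (x - t)) * paperWeight x := by
      funext x
      rw [hconv_eq x]
    rw [heq2]
    exact part2_meas f' g' hf'm hg'm hf' hg'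

theorem paperWeight_L2_algebra :
    ∃ C : ℝ, 0 < C ∧
      (∀ᵐ x : ℝ, (∫ t : ℝ, (paperWeight t ^ 2)⁻¹ * (paperWeight (x - t) ^ 2)⁻¹) ≤
          C * (paperWeight x ^ 2)⁻¹) ∧
      ∀ f g : ℝ → ℝ,
        MemLp (fun x => f x * paperWeight x) 2 (volume : Measure ℝ) →
        MemLp (fun x => g x * paperWeight x) 2 (volume : Measure ℝ) →
        MemLp (fun x => (∫ t : ℝ, f t * g (x - t)) * paperWeight x) 2
          (volume : Measure ℝ) := by
  exact paperWeight_L2_algebra'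
end
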